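/- arXiv:1109.2557 — 2 statements merged into one kernel-verified Lean document; each statement's English description precedes it below -/
import Mathlib

section
/- Under the stated assumptions, suppose additionally: (a) |f0(T)| ≤ C0 for all T ∈ [t0, T*]; (b) there are an integer θ ≥ 0 with ℓ(t*) + θ ≤ N and measurable coefficients λ_0(t),…,λ_θ(t) with |λ_i(t)| ≤ Λ such that |f(t, t) − Σ_{i=0}^{θ} λ_i(t) f(t, T_{ℓ(t)+i})| ≤ C₁ Δ^p for all t ∈ [t0, t*]; (c) there are weights γ̃_{ϱ(t*)},…,γ̃_N with |γ̃_j| ≤ Γ such that |Δ·Σ_{j=ϱ(t*)}^{N} γ̃_j f(t*, T_j) − ∫_{t*}^{T*} f(t*, u) du| ≤ C₁ Δ^p; (d) the quadrature in the dynamics has order p along the exact solution, i.e., |Δ·Σ_{k=ℓ(s)}^{κ(s,T_i)} γ_k(s) σ_j(s, T_k, f(s, T_k)) − ∫_s^{T_i} σ_j(s, u, f(s, u)) du| ≤ C₁ Δ^p for all s, i, j; and (e) G : ℝ → ℝ is globally Lipschitz. Define Y = ∫_{t0}^{t*} f(s, s) ds, Z = ∫_{t*}^{T*} f(t*, u) du,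 Ỹ = ∫_{t0}^{t*} Σ_{i=0}^{θ} λ_i(s) f̃^{ℓ(s)+i}(s) ds, and S̃_Z = Δ·Σ_{j=ϱ(t*)}^{N} γ̃_j f̃^j(t*). Then |e^{−Y} G(e^{−Z}) − e^{−Ỹ} G(e^{−S̃_Z})| ≤ K Δ^p, where K depends only on C, L, Γ, Λ, θ, C0, C₁, d, t* − t0, T* − t0, the Lipschitz constant of G and |G(0)|, but not on Δ or N. -/
/-- The maturity-time grid node `T_i = t0 + i·Δ` with `Δ = (T* − t0)/N`. -/
noncomputable def Tgrid (t0 Tstar : ℝ) (N i : ℕ) : ℝ := t0 + i * ((Tstar - t0) / N)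

/-- `ℓ(s)`: the largest grid index `i` with `T_i ≤ s`. -/
noncomputable def ellIdx (t0 Tstar : ℝ) (N : ℕ) (s : ℝ) : ℕ :=
  Nat.floor ((s - t0) / ((Tstar - t0) / N))


open MeasureTheory Set intervalIntegral

noncomputable def clampW (a b x : ℝ) : ℝ := max a (min x b)

lemma clampW_mem {a b : ℝ} (hab : a ≤ b) (x : ℝ) : clampW a b x ∈ Icc a b :=
  ⟨le_max_left _ _, max_le hab (min_le_right x b)⟩

lemma clampW_eq {a b x : ℝ} (hx : x ∈ Icc a b) : clampW a b x = x := by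
  unfold clampW
  rw [min_eq_left hx.2, max_eq_right hx.1]

lemma continuous_clampW (a b : ℝ) : Continuous (clampW a b) :=
  continuous_const.max (continuous_id.min continuous_const)

lemma abs_exp_sub_exp_le {B x y : ℝ} (hx : x ≤ B) (hy : y ≤ B) :
    |Real.exp x - Real.exp y| ≤ Real.exp B * |x - y| := by
  have h1 : Real.exp x - Real.exp y = ∫ t in y..x, Real.exp t := by
    rw [integral_exp]
  rw [h1, ← Real.norm_eq_abs]
  have h2 : ∀ t ∈ Set.uIoc y x, ‖Real.exp t‖ ≤ Real.exp B := by
    intro t ht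
    rw [Real.norm_eq_abs, abs_of_pos (Real.exp_pos t)]
    exact Real.exp_le_exp.mpr (ht.2.trans (max_le hy hx))
  simpa [abs_sub_comm] using intervalIntegral.norm_integral_le_of_norm_le_const h2

lemma gronwall_integral_ineq {u : ℝ → ℝ} {a b K ε : ℝ} (hab : a ≤ b) (hK : 0 ≤ K) (hε : 0 ≤ ε)
    (hu : ContinuousOn u (Icc a b)) (hnn : ∀ t ∈ Icc a b, 0 ≤ u t)
    (hineq : ∀ t ∈ Icc a b, u t ≤ ε + K * ∫ s in a..t, u s) :
    ∀ t ∈ Icc a b, u t ≤ ε * Real.exp (K * (b - a)) := by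
  set U : ℝ → ℝ := fun t => u (clampW a b t) with hUdef
  have hUc : Continuous U := hu.comp_continuous (continuous_clampW a b) (fun x => clampW_mem hab x)
  have hUeq : ∀ t ∈ Icc a b, U t = u t := fun t ht => by rw [hUdef]; simp [clampW_eq ht]
  have hUnn : ∀ t, 0 ≤ U t := fun t => hnn _ (clampW_mem hab t)
  set v : ℝ → ℝ := fun t => ∫ s in a..t, U s with hvdef
  have hv : ∀ t, HasDerivAt v (U t) t := fun t =>
    intervalIntegral.integral_hasDerivAt_right (hUc.intervalIntegrable _ _)
      (hUc.stronglyMeasurableAtFilter _ _) hUc.continuousAt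
  have hvnn : ∀ t, a ≤ t → 0 ≤ v t := fun t ht =>
    intervalIntegral.integral_nonneg ht (fun s _ => hUnn s)
  have hUineq : ∀ t ∈ Icc a b, U t ≤ ε + K * v t := by
    intro t ht
    have : v t = ∫ s in a..t, u s := by
      apply intervalIntegral.integral_congr
      intro s hs
      have hs' : s ∈ Icc a b := by
        rw [Set.uIcc_of_le ht.1] at hs
        exact ⟨hs.1, hs.2.trans ht.2⟩
      exact hUeq s hs'
    rw [this, hUeq t ht]
    exact hineq t ht
  have key : ∀ t ∈ Icc a b, ‖v t‖ ≤ gronwallBound 0 K ε (t - a) := by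
    apply norm_le_gronwallBound_of_norm_deriv_right_le
      (fun t _ => ((hv t).continuousAt).continuousWithinAt)
      (fun t _ => (hv t).hasDerivWithinAt)
    · simp [hvdef]
    · intro t ht
      rw [Real.norm_eq_abs, Real.norm_eq_abs, abs_of_nonneg (hUnn t),
        abs_of_nonneg (hvnn t ht.1)]
      have := hUineq t ⟨ht.1, le_of_lt ht.2⟩
      linarith
  intro t ht
  have h1 : u t = U t := (hUeq t ht).symm
  have h2 : u t ≤ ε + K * v t := by rw [h1]; exact hUineq t ht
  have h3 : ‖v t‖ ≤ gronwallBound 0 K ε (t - a) := key t ht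
  have hvt : v t ≤ gronwallBound 0 K ε (t - a) := le_trans (le_abs_self _) h3
  rcases eq_or_lt_of_le hK with hK0 | hKpos
  · -- K = 0
    rw [← hK0] at h2 ⊢
    rw [zero_mul, Real.exp_zero, mul_one]
    simpa using h2
  · have hKne : K ≠ 0 := ne_of_gt hKpos
    rw [gronwallBound_of_K_ne_0 hKne] at hvt
    have hexp : Real.exp (K * (t - a)) ≤ Real.exp (K * (b - a)) :=
      Real.exp_le_exp.mpr (by nlinarith [ht.2])
    have : u t ≤ ε + K * (0 * Real.exp (K * (t-a)) + ε / K * (Real.exp (K * (t - a)) - 1)) := by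
      have := mul_le_mul_of_nonneg_left hvt (le_of_lt hKpos)
      linarith
    rw [zero_mul, zero_add] at this
    have hKdiv : K * (ε / K * (Real.exp (K * (t - a)) - 1)) = ε * (Real.exp (K * (t-a)) - 1) := by
      field_simp
    rw [hKdiv] at this
    calc u t ≤ ε + ε * (Real.exp (K * (t-a)) - 1) := this
      _ = ε * Real.exp (K * (t - a)) := by ring
      _ ≤ ε * Real.exp (K * (b - a)) := by nlinarith

set_option maxHeartbeats 1600000 in
/-- Noise-free analogue of the paper's weak `T`-discretization error theorem: under
order-`p` quadratures for the drift, the short rate and the bond-price integral, the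
approximate discounted payoff `e^{−Ỹ} G(e^{−S̃_Z})` deviates from the exact one
`e^{−Y} G(e^{−Z})` by at most `K Δ^p`, with `K` depending only on
`C, L, Γ, Λ, θ, C0, C₁, d, t* − t0, T* − t0`, the Lipschitz constant of `G` and `|G 0|`. -/
theorem weak_T_discretization_price_error_order_p
    (t0 tstar Tstar : ℝ) (d : ℕ) (C L Γ Λ C0 C₁ p LG : ℝ) (θ : ℕ)
    (h1 : t0 < tstar) (h2 : tstar ≤ Tstar) (hd : 1 ≤ d)
    (hC : 0 < C) (hL : 0 ≤ L) (hΓ : 0 ≤ Γ) (hΛ : 0 ≤ Λ) (hC0 : 0 ≤ C0)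
    (hC₁ : 0 < C₁) (hp : 0 < p) (hLG : 0 ≤ LG)
    (G : ℝ → ℝ) (hGlip : ∀ z z', |G z - G z'| ≤ LG * |z - z'|) :
    ∃ K > 0,
      ∀ σ : Fin d → ℝ → ℝ → ℝ → ℝ,
        (∀ j, Measurable fun q : ℝ × ℝ × ℝ => σ j q.1 q.2.1 q.2.2) →
        (∀ j t T z, |σ j t T z| ≤ C) →
        (∀ j t T z z', |σ j t T z - σ j t T z'| ≤ L * |z - z'|) →
      ∀ f0 : ℝ → ℝ, ContinuousOn f0 (Set.Icc t0 Tstar) →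
        (∀ T ∈ Set.Icc t0 Tstar, |f0 T| ≤ C0) →
      ∀ f : ℝ → ℝ → ℝ,
        ContinuousOn (fun q : ℝ × ℝ => f q.1 q.2)
          (Set.Icc t0 tstar ×ˢ Set.Icc t0 Tstar) →
        (∀ t ∈ Set.Icc t0 tstar, ∀ T ∈ Set.Icc t0 Tstar,
          f t T = f0 T + ∫ s in t0..t, ∑ j : Fin d,
            σ j s T (f s T) * ∫ u in s..T, σ j s u (f s u)) →
      ∀ N : ℕ, 0 < N →
      ∀ γ : ℕ → ℝ → ℝ, (∀ k, Measurable (γ k)) → (∀ k s, |γ k s| ≤ Γ) →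
      ∀ κ : ℝ → ℕ → ℕ, (∀ i, Measurable fun s => κ s i) →
        (∀ s ∈ Set.Icc t0 tstar, ∀ i ≤ N,
          ellIdx t0 Tstar N s ≤ κ s i ∧ κ s i ≤ N) →
      ∀ ftil : ℕ → ℝ → ℝ,
        (∀ i ≤ N, ContinuousOn (ftil i) (Set.Icc t0 tstar)) →
        -- the maturity-discretized system of integral equations
        (∀ i ≤ N, ∀ t ∈ Set.Icc t0 tstar,
          ftil i t = f0 (Tgrid t0 Tstar N i) + ∫ s in t0..t, ∑ j : Fin d,
            σ j s (Tgrid t0 Tstar N i) (ftil i s) *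
              (((Tstar - t0) / N) *
                ∑ k ∈ Finset.Icc (ellIdx t0 Tstar N s) (κ s i),
                  γ k s * σ j s (Tgrid t0 Tstar N k) (ftil k s))) →
        -- (d) the drift quadrature has order `p` along the exact solution
        (∀ s ∈ Set.Icc t0 tstar, ∀ i ≤ N, ∀ j : Fin d,
          |((Tstar - t0) / N) *
              ∑ k ∈ Finset.Icc (ellIdx t0 Tstar N s) (κ s i),
                γ k s * σ j s (Tgrid t0 Tstar N k) (f s (Tgrid t0 Tstar N k)) -
            ∫ u in s..(Tgrid t0 Tstar N i), σ j s u (f s u)|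
              ≤ C₁ * ((Tstar - t0) / N) ^ p) →
      -- (b) order-`p` short-rate approximation coefficients λ_i(t)
      ellIdx t0 Tstar N tstar + θ ≤ N →
      ∀ lam : ℕ → ℝ → ℝ, (∀ i ≤ θ, Measurable (lam i)) →
        (∀ i ≤ θ, ∀ t, |lam i t| ≤ Λ) →
        (∀ t ∈ Set.Icc t0 tstar,
          |f t t - ∑ i ∈ Finset.range (θ + 1),
              lam i t * f t (Tgrid t0 Tstar N (ellIdx t0 Tstar N t + i))|
            ≤ C₁ * ((Tstar - t0) / N) ^ p) →
      -- (c) order-`p` bond-price quadrature weights γ̃_j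
      ∀ γtil : ℕ → ℝ, (∀ j, |γtil j| ≤ Γ) →
        (|((Tstar - t0) / N) *
            ∑ j ∈ Finset.Icc (ellIdx t0 Tstar N tstar + 1) N,
              γtil j * f tstar (Tgrid t0 Tstar N j) -
          ∫ u in tstar..Tstar, f tstar u| ≤ C₁ * ((Tstar - t0) / N) ^ p) →
      -- conclusion
      let Y : ℝ := ∫ s in t0..tstar, f s s
      let Z : ℝ := ∫ u in tstar..Tstar, f tstar u
      let Ytil : ℝ := ∫ s in t0..tstar, ∑ i ∈ Finset.range (θ + 1),
        lam i s * ftil (ellIdx t0 Tstar N s + i) s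
      let SZtil : ℝ := ((Tstar - t0) / N) *
        ∑ j ∈ Finset.Icc (ellIdx t0 Tstar N tstar + 1) N, γtil j * ftil j tstar
      |Real.exp (-Y) * G (Real.exp (-Z)) - Real.exp (-Ytil) * G (Real.exp (-SZtil))|
        ≤ K * ((Tstar - t0) / N) ^ p := by
  classical
  set R0 : ℝ := tstar - t0 with hR0def
  set R1 : ℝ := Tstar - t0 with hR1def
  have hR0 : 0 < R0 := by rw [hR0def]; linarith
  have hR1 : 0 < R1 := by rw [hR1def]; linarith
  have hdnn : (0:ℝ) ≤ (d:ℝ) := Nat.cast_nonneg d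
  set M : ℝ := C0 + (d:ℝ) * C ^ 2 * R1 * R0 with hMdef
  set Mt : ℝ := C0 + 2 * (d:ℝ) * C ^ 2 * Γ * R1 * R0 with hMtdef
  set aG : ℝ := (d:ℝ) * (L * C * R1 + 2 * C * R1 * Γ * L) with haGdef
  set E : ℝ := (d:ℝ) * C * C₁ * R0 * Real.exp (aG * R0) with hEdef
  set KY : ℝ := R0 * (C₁ + ((θ:ℝ) + 1) * Λ * E) with hKYdef
  set KZ : ℝ := C₁ + R1 * Γ * E with hKZdef
  set MY : ℝ := R0 * M + R0 * (((θ:ℝ) + 1) * Λ * Mt) with hMYdef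
  set MZ : ℝ := R1 * M + R1 * Γ * Mt with hMZdef
  have hMnn : 0 ≤ M := by
    rw [hMdef]
    have : (0:ℝ) ≤ (d:ℝ) * C ^ 2 * R1 * R0 :=
      mul_nonneg (mul_nonneg (mul_nonneg hdnn (sq_nonneg C)) hR1.le) hR0.le
    linarith
  have hMtnn : 0 ≤ Mt := by
    rw [hMtdef]
    have : (0:ℝ) ≤ 2 * (d:ℝ) * C ^ 2 * Γ * R1 * R0 := by positivity
    linarith
  have haGnn : 0 ≤ aG := by
    rw [haGdef]
    have h1' : (0:ℝ) ≤ L * C * R1 := by positivity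
    have h2' : (0:ℝ) ≤ 2 * C * R1 * Γ * L := by positivity
    positivity
  have hEnn : 0 ≤ E := by
    rw [hEdef]; positivity
  have hKYnn : 0 ≤ KY := by
    rw [hKYdef]
    have hθnn : (0:ℝ) ≤ (θ:ℝ) + 1 := by positivity
    have : (0:ℝ) ≤ C₁ + ((θ:ℝ) + 1) * Λ * E := by positivity
    positivity
  have hKZnn : 0 ≤ KZ := by
    rw [hKZdef]; positivity
  refine ⟨Real.exp MY * ((|G 0| + LG * Real.exp MZ) * KY + LG * Real.exp MZ * KZ) + 1, ?_, ?_⟩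
  · have h' : 0 ≤ Real.exp MY * ((|G 0| + LG * Real.exp MZ) * KY + LG * Real.exp MZ * KZ) := by
      have e1 : 0 ≤ Real.exp MY := (Real.exp_pos _).le
      have e2 : 0 ≤ Real.exp MZ := (Real.exp_pos _).le
      have e3 : 0 ≤ |G 0| := abs_nonneg _
      have : 0 ≤ (|G 0| + LG * Real.exp MZ) * KY := by positivity
      have : 0 ≤ LG * Real.exp MZ * KZ := by positivity
      positivity
    linarith
  intro σ hσm hσb hσl f0 hf0c hf0b f hfc hfeq N hN γ hγm hγb κ hκm hκb ftil hftc hfteq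
    hquad hθN lam hlamm hlamb hlama γtil hγtb hZq
  intro Y Z Ytil SZtil
  set Δ : ℝ := R1 / (N:ℝ) with hΔdef
  have hNpos : (0:ℝ) < (N:ℝ) := Nat.cast_pos.mpr hN
  have hΔpos : 0 < Δ := by rw [hΔdef]; positivity
  have hΔp : 0 < Δ ^ p := Real.rpow_pos_of_pos hΔpos p
  have hNΔ : (N:ℝ) * Δ = R1 := by rw [hΔdef]; field_simp
  have hΔleR1 : Δ ≤ R1 := by
    rw [hΔdef]
    exact div_le_self hR1.le (by exact_mod_cast hN)
  have hIccsub : Set.Icc t0 tstar ⊆ Set.Icc t0 Tstar :=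
    Set.Icc_subset_Icc le_rfl h2
  have hTg : ∀ i : ℕ, Tgrid t0 Tstar N i = t0 + (i:ℝ) * Δ := by
    intro i; rw [Tgrid, hΔdef, hR1def]
  have hTmem : ∀ i ≤ N, Tgrid t0 Tstar N i ∈ Set.Icc t0 Tstar := by
    intro i hi
    rw [hTg i]
    constructor
    · have h' : 0 ≤ (i:ℝ) * Δ := mul_nonneg (Nat.cast_nonneg i) hΔpos.le
      linarith only [h']
    · have hi' : (i:ℝ) ≤ (N:ℝ) := Nat.cast_le.mpr hi
      have h3 : (i:ℝ) * Δ ≤ (N:ℝ) * Δ := mul_le_mul_of_nonneg_right hi' hΔpos.le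
      have h4 : t0 + (i:ℝ) * Δ ≤ t0 + R1 := by rw [← hNΔ]; linarith only [h3]
      rw [hR1def] at h4
      linarith only [h4]
  have hTdiff : ∀ s ∈ Set.Icc t0 Tstar, ∀ T ∈ Set.Icc t0 Tstar, |T - s| ≤ R1 := by
    intro s hs T hT
    rw [abs_le, hR1def]
    constructor
    · linarith only [hT.1, hs.2]
    · linarith only [hT.2, hs.1]
  have hellmono : ∀ s ∈ Set.Icc t0 tstar, ellIdx t0 Tstar N s ≤ ellIdx t0 Tstar N tstar := by
    intro s hs
    have hden : (0:ℝ) < (Tstar - t0) / (N:ℝ) :=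
      div_pos (by linarith only [h1, h2]) hNpos
    unfold ellIdx
    exact Nat.floor_mono ((div_le_div_iff_of_pos_right hden).mpr (by linarith only [hs.2]))
  have hellm : Measurable (ellIdx t0 Tstar N) := by
    unfold ellIdx
    exact ((measurable_id.sub_const t0).div_const _).nat_floor
  -- a priori bound on the inner integral of σ along f
  have hIabd : ∀ j : Fin d, ∀ s ∈ Set.Icc t0 Tstar, ∀ T ∈ Set.Icc t0 Tstar,
      |∫ u in s..T, σ j s u (f s u)| ≤ C * R1 := by
    intro j s hs T hT
    have h := intervalIntegral.norm_integral_le_of_norm_le_const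
      (C := C) (a := s) (b := T) (f := fun u => σ j s u (f s u))
      (fun u _ => by rw [Real.norm_eq_abs]; exact hσb j s u (f s u))
    rw [Real.norm_eq_abs] at h
    exact h.trans (mul_le_mul_of_nonneg_left (hTdiff s hs T hT) hC.le)
  -- a priori bound on f
  have hfbd : ∀ t ∈ Set.Icc t0 tstar, ∀ T ∈ Set.Icc t0 Tstar, |f t T| ≤ M := by
    intro t ht T hT
    rw [hfeq t ht T hT]
    have hbd : ∀ s ∈ Set.uIoc t0 t,
        ‖∑ j : Fin d, σ j s T (f s T) * ∫ u in s..T, σ j s u (f s u)‖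
          ≤ (d:ℝ) * (C * (C * R1)) := by
      intro s hs
      rw [Set.uIoc_of_le ht.1] at hs
      have hsI : s ∈ Set.Icc t0 tstar := ⟨hs.1.le, hs.2.trans ht.2⟩
      calc ‖∑ j : Fin d, σ j s T (f s T) * ∫ u in s..T, σ j s u (f s u)‖
          ≤ ∑ j : Fin d, ‖σ j s T (f s T) * ∫ u in s..T, σ j s u (f s u)‖ :=
            norm_sum_le _ _
        _ ≤ ∑ _j : Fin d, C * (C * R1) := by
            apply Finset.sum_le_sum
            intro j _
            rw [norm_mul, Real.norm_eq_abs, Real.norm_eq_abs]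
            exact mul_le_mul (hσb j s T (f s T)) (hIabd j s (hIccsub hsI) T hT)
              (abs_nonneg _) hC.le
        _ = (d:ℝ) * (C * (C * R1)) := by
            rw [Finset.sum_const, Finset.card_univ, Fintype.card_fin, nsmul_eq_mul]
    have h := intervalIntegral.norm_integral_le_of_norm_le_const hbd
    rw [Real.norm_eq_abs] at h
    have habs : |t - t0| ≤ R0 := by
      rw [abs_of_nonneg (by linarith only [ht.1]), hR0def]
      linarith only [ht.2]
    refine (abs_add_le _ _).trans ?_
    have h2' := h.trans (mul_le_mul_of_nonneg_left habs (by positivity))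
    have h3' := hf0b T hT
    have h4' : (d:ℝ) * (C * (C * R1)) * R0 = (d:ℝ) * C ^ 2 * R1 * R0 := by ring
    rw [hMdef]
    linarith only [h2', h3', h4']
  -- a priori bound on ftil
  have hcardIcc : ∀ a b : ℕ, b ≤ N → ((Finset.Icc a b).card : ℝ) ≤ (N:ℝ) + 1 := by
    intro a b hb
    rw [Nat.card_Icc]
    have : b + 1 - a ≤ N + 1 := by omega
    exact_mod_cast this
  have hΔN1 : ((N:ℝ) + 1) * Δ ≤ 2 * R1 := by
    have : ((N:ℝ) + 1) * Δ = (N:ℝ) * Δ + Δ := by ring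
    rw [this, hNΔ]
    linarith only [hΔleR1]
  have hQbd : ∀ i ≤ N, ∀ g : ℕ → ℝ → ℝ, (∀ k s, |g k s| ≤ C) → ∀ s ∈ Set.Icc t0 tstar,
      |Δ * ∑ k ∈ Finset.Icc (ellIdx t0 Tstar N s) (κ s i), γ k s * g k s| ≤ 2 * R1 * (Γ * C) := by
    intro i hi g hg s hs
    rw [abs_mul, abs_of_pos hΔpos]
    have hsum : |∑ k ∈ Finset.Icc (ellIdx t0 Tstar N s) (κ s i), γ k s * g k s|
        ≤ ((Finset.Icc (ellIdx t0 Tstar N s) (κ s i)).card : ℝ) * (Γ * C) := by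
      refine (Finset.abs_sum_le_sum_abs _ _).trans ?_
      have : ∀ k ∈ Finset.Icc (ellIdx t0 Tstar N s) (κ s i), |γ k s * g k s| ≤ Γ * C := by
        intro k _
        rw [abs_mul]
        exact mul_le_mul (hγb k s) (hg k s) (abs_nonneg _) hΓ
      refine (Finset.sum_le_sum this).trans ?_
      rw [Finset.sum_const, nsmul_eq_mul]
    have hcard := hcardIcc (ellIdx t0 Tstar N s) (κ s i) (hκb s hs i hi).2
    have hΓC : (0:ℝ) ≤ Γ * C := by positivity
    calc Δ * |∑ k ∈ Finset.Icc (ellIdx t0 Tstar N s) (κ s i), γ k s * g k s|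
        ≤ Δ * (((Finset.Icc (ellIdx t0 Tstar N s) (κ s i)).card : ℝ) * (Γ * C)) :=
          mul_le_mul_of_nonneg_left hsum hΔpos.le
      _ ≤ Δ * (((N:ℝ) + 1) * (Γ * C)) := by
          refine mul_le_mul_of_nonneg_left ?_ hΔpos.le
          exact mul_le_mul_of_nonneg_right hcard hΓC
      _ = (((N:ℝ) + 1) * Δ) * (Γ * C) := by ring
      _ ≤ 2 * R1 * (Γ * C) := mul_le_mul_of_nonneg_right hΔN1 hΓC
  have hftbd : ∀ i ≤ N, ∀ t ∈ Set.Icc t0 tstar, |ftil i t| ≤ Mt := by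
    intro i hi t ht
    rw [hfteq i hi t ht]
    have hbd : ∀ s ∈ Set.uIoc t0 t,
        ‖∑ j : Fin d, σ j s (Tgrid t0 Tstar N i) (ftil i s) *
          (Δ * ∑ k ∈ Finset.Icc (ellIdx t0 Tstar N s) (κ s i),
            γ k s * σ j s (Tgrid t0 Tstar N k) (ftil k s))‖
          ≤ (d:ℝ) * (C * (2 * R1 * (Γ * C))) := by
      intro s hs
      rw [Set.uIoc_of_le ht.1] at hs
      have hsI : s ∈ Set.Icc t0 tstar := ⟨hs.1.le, hs.2.trans ht.2⟩
      refine (norm_sum_le _ _).trans ?_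
      have hterm : ∀ j : Fin d, ‖σ j s (Tgrid t0 Tstar N i) (ftil i s) *
          (Δ * ∑ k ∈ Finset.Icc (ellIdx t0 Tstar N s) (κ s i),
            γ k s * σ j s (Tgrid t0 Tstar N k) (ftil k s))‖ ≤ C * (2 * R1 * (Γ * C)) := by
        intro j
        rw [norm_mul, Real.norm_eq_abs, Real.norm_eq_abs]
        refine mul_le_mul (hσb j _ _ _) ?_ (abs_nonneg _) hC.le
        exact hQbd i hi (fun k s => σ j s (Tgrid t0 Tstar N k) (ftil k s))
          (fun k s => hσb j s _ _) s hsI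
      refine (Finset.sum_le_sum (fun j _ => hterm j)).trans ?_
      rw [Finset.sum_const, Finset.card_univ, Fintype.card_fin, nsmul_eq_mul]
    have h := intervalIntegral.norm_integral_le_of_norm_le_const hbd
    rw [Real.norm_eq_abs] at h
    have habs : |t - t0| ≤ R0 := by
      rw [abs_of_nonneg (by linarith only [ht.1]), hR0def]
      linarith only [ht.2]
    refine (abs_add_le _ _).trans ?_
    have h2' := h.trans (mul_le_mul_of_nonneg_left habs (by positivity))
    have h3' : |f0 (Tgrid t0 Tstar N i)| ≤ C0 := hf0b _ (hTmem i hi)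
    have h4' : (d:ℝ) * (C * (2 * R1 * (Γ * C))) * R0 = 2 * (d:ℝ) * C ^ 2 * Γ * R1 * R0 := by
      ring
    rw [hMtdef]
    linarith only [h2', h3', h4']
  -- error function
  set uerr : ℝ → ℝ := fun t =>
    ‖fun i : Fin (N+1) =>
      f (clampW t0 tstar t) (Tgrid t0 Tstar N (i:ℕ)) - ftil (i:ℕ) (clampW t0 tstar t)‖
    with huerrdef
  have hunn : ∀ t, 0 ≤ uerr t := fun t => norm_nonneg _
  have hucont : Continuous uerr := by
    apply Continuous.norm
    apply continuous_pi
    intro i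
    have hiN : (i:ℕ) ≤ N := Nat.lt_succ_iff.mp i.2
    apply Continuous.sub
    · apply hfc.comp_continuous
        ((continuous_clampW t0 tstar).prodMk continuous_const)
      intro x
      exact Set.mk_mem_prod (clampW_mem h1.le x) (hTmem _ hiN)
    · exact (hftc _ hiN).comp_continuous (continuous_clampW t0 tstar)
        (fun x => clampW_mem h1.le x)
  have hule : ∀ t ∈ Set.Icc t0 tstar, ∀ i ≤ N,
      |f t (Tgrid t0 Tstar N i) - ftil i t| ≤ uerr t := by
    intro t ht i hi
    have h := norm_le_pi_norm
      (fun i : Fin (N+1) =>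
        f (clampW t0 tstar t) (Tgrid t0 Tstar N (i:ℕ)) - ftil (i:ℕ) (clampW t0 tstar t))
      ⟨i, Nat.lt_succ_of_le hi⟩
    rw [huerrdef]
    simpa [clampW_eq ht, Real.norm_eq_abs] using h
  set ftilbar : ℕ → ℝ → ℝ := fun k s => ftil k (clampW t0 tstar s) with hftilbardef
  have hftilbarc : ∀ k ≤ N, Continuous (ftilbar k) := fun k hk =>
    (hftc k hk).comp_continuous (continuous_clampW t0 tstar) (fun x => clampW_mem h1.le x)
  have hftilbareq : ∀ k, ∀ s ∈ Set.Icc t0 tstar, ftilbar k s = ftil k s := by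
    intro k s hs
    rw [hftilbardef]
    simp only [clampW_eq hs]
  -- global continuous extension of f
  set fbar : ℝ → ℝ → ℝ := fun s v => f (clampW t0 tstar s) (clampW t0 Tstar v) with hfbardef
  have hT0T : t0 ≤ Tstar := h1.le.trans h2
  have hfbarc : Continuous (fun q : ℝ × ℝ => fbar q.1 q.2) := by
    apply hfc.comp_continuous
      (((continuous_clampW t0 tstar).comp continuous_fst).prodMk
        ((continuous_clampW t0 Tstar).comp continuous_snd))
    intro q
    exact Set.mk_mem_prod (clampW_mem h1.le q.1) (clampW_mem hT0T q.2)
  have hfbareq : ∀ s ∈ Set.Icc t0 tstar, ∀ v ∈ Set.Icc t0 Tstar, fbar s v = f s v := by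
    intro s hs v hv
    rw [hfbardef]
    simp only [clampW_eq hs, clampW_eq hv]
  have hσFm : ∀ j : Fin d, Measurable (fun q : ℝ × ℝ => σ j q.1 q.2 (fbar q.1 q.2)) := by
    intro j
    exact (hσm j).comp (measurable_fst.prodMk (measurable_snd.prodMk hfbarc.measurable))
  -- the moving-endpoint inner integral, globalized measurably
  set Abar : Fin d → ℕ → ℝ → ℝ := fun j i s =>
    (∫ v in Set.Ioc t0 (Tgrid t0 Tstar N i), σ j s v (fbar s v)) -
    (∫ v in Set.Ioc t0 Tstar, if v ≤ s then σ j s v (fbar s v) else 0) with hAbardef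
  have hAbarm : ∀ j i, Measurable (Abar j i) := by
    intro j i
    apply Measurable.sub
    · exact (MeasureTheory.StronglyMeasurable.integral_prod_right'
        (ν := MeasureTheory.volume.restrict (Set.Ioc t0 (Tgrid t0 Tstar N i)))
        ((hσFm j).stronglyMeasurable)).measurable
    · have hm : Measurable (fun q : ℝ × ℝ =>
          if q.2 ≤ q.1 then σ j q.1 q.2 (fbar q.1 q.2) else 0) :=
        Measurable.ite (measurableSet_le measurable_snd measurable_fst) (hσFm j)
          measurable_const
      exact (MeasureTheory.StronglyMeasurable.integral_prod_right'
        (ν := MeasureTheory.volume.restrict (Set.Ioc t0 Tstar))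
        hm.stronglyMeasurable).measurable
  have hAbareq : ∀ j : Fin d, ∀ i ≤ N, ∀ s ∈ Set.Icc t0 tstar,
      Abar j i s = ∫ v in s..(Tgrid t0 Tstar N i), σ j s v (f s v) := by
    intro j i hi s hs
    have hTi := hTmem i hi
    have hsT : s ∈ Set.Icc t0 Tstar := hIccsub hs
    have hcongr : (∫ v in s..(Tgrid t0 Tstar N i), σ j s v (f s v))
        = ∫ v in s..(Tgrid t0 Tstar N i), σ j s v (fbar s v) := by
      apply intervalIntegral.integral_congr
      intro v hv
      have hv' : v ∈ Set.Icc t0 Tstar := Set.uIcc_subset_Icc hsT hTi hv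
      show σ j s v (f s v) = σ j s v (fbar s v)
      rw [hfbareq s hs v hv']
    rw [hcongr]
    have hint : ∀ b : ℝ, IntervalIntegrable (fun v => σ j s v (fbar s v))
        MeasureTheory.volume t0 b := by
      intro b
      rw [intervalIntegrable_iff]
      apply MeasureTheory.Measure.integrableOn_of_bounded (M := C) measure_Ioc_lt_top.ne
      · exact ((hσFm j).comp (measurable_const.prodMk measurable_id)).aestronglyMeasurable
      · exact Filter.Eventually.of_forall fun v => by
          rw [Real.norm_eq_abs]; exact hσb j s v (fbar s v)
    have hsub := intervalIntegral.integral_interval_sub_left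
      (hint (Tgrid t0 Tstar N i)) (hint s)
    rw [← hsub, hAbardef]
    simp only []
    congr 1
    · rw [intervalIntegral.integral_of_le hTi.1]
    · rw [intervalIntegral.integral_of_le hs.1]
      have hind : (fun v => if v ≤ s then σ j s v (fbar s v) else 0)
          = Set.indicator (Set.Iic s) (fun v => σ j s v (fbar s v)) := by
        funext v
        rw [Set.indicator_apply]
        simp only [Set.mem_Iic]
      rw [hind, MeasureTheory.setIntegral_indicator measurableSet_Iic,
        Set.Ioc_inter_Iic, min_eq_right (hs.2.trans h2)]
  -- the two integrands, globalized
  set gbar : ℕ → ℝ → ℝ := fun i s => ∑ j : Fin d,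
      σ j s (Tgrid t0 Tstar N i) (fbar s (Tgrid t0 Tstar N i)) * Abar j i s with hgbardef
  have hgbarm : ∀ i, Measurable (gbar i) := by
    intro i
    apply Finset.measurable_sum
    intro j _
    exact ((hσFm j).comp (measurable_id.prodMk measurable_const)).mul (hAbarm j i)
  have hgbareq : ∀ i ≤ N, ∀ s ∈ Set.Icc t0 tstar, gbar i s =
      ∑ j : Fin d, σ j s (Tgrid t0 Tstar N i) (f s (Tgrid t0 Tstar N i)) *
        ∫ v in s..(Tgrid t0 Tstar N i), σ j s v (f s v) := by
    intro i hi s hs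
    rw [hgbardef]
    apply Finset.sum_congr rfl
    intro j _
    rw [hfbareq s hs _ (hTmem i hi), hAbareq j i hi s hs]
  set gtil : ℕ → ℝ → ℝ := fun i s => ∑ j : Fin d,
      σ j s (Tgrid t0 Tstar N i) (ftilbar i s) * (Δ * ∑ k ∈ Finset.range (N+1),
        (if ellIdx t0 Tstar N s ≤ k ∧ k ≤ κ s i then
          γ k s * σ j s (Tgrid t0 Tstar N k) (ftilbar k s) else 0)) with hgtildef
  have hgtilm : ∀ i ≤ N, Measurable (gtil i) := by
    intro i hi
    apply Finset.measurable_sum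
    intro j _
    apply Measurable.mul
    · exact (hσm j).comp (measurable_id.prodMk
        (measurable_const.prodMk (hftilbarc i hi).measurable))
    · apply Measurable.const_mul
      apply Finset.measurable_sum
      intro k hk
      have hkN : k ≤ N := Nat.lt_succ_iff.mp (Finset.mem_range.mp hk)
      refine Measurable.ite ?_ ?_ measurable_const
      · exact (measurableSet_le hellm measurable_const).inter
          (measurableSet_le measurable_const (hκm i))
      · exact (hγm k).mul ((hσm j).comp (measurable_id.prodMk
          (measurable_const.prodMk (hftilbarc k hkN).measurable)))
  have hgtileq : ∀ i ≤ N, ∀ s ∈ Set.Icc t0 tstar, gtil i s =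
      ∑ j : Fin d, σ j s (Tgrid t0 Tstar N i) (ftil i s) *
        (Δ * ∑ k ∈ Finset.Icc (ellIdx t0 Tstar N s) (κ s i),
          γ k s * σ j s (Tgrid t0 Tstar N k) (ftil k s)) := by
    intro i hi s hs
    rw [hgtildef]
    apply Finset.sum_congr rfl
    intro j _
    rw [hftilbareq i s hs]
    congr 2
    have hfilter : Finset.Icc (ellIdx t0 Tstar N s) (κ s i)
        = (Finset.range (N+1)).filter
            (fun k => ellIdx t0 Tstar N s ≤ k ∧ k ≤ κ s i) := by
      ext k
      simp only [Finset.mem_Icc, Finset.mem_filter, Finset.mem_range, Nat.lt_succ_iff]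
      constructor
      · intro hk
        exact ⟨hk.2.trans (hκb s hs i hi).2, hk⟩
      · intro hk
        exact hk.2
    rw [← Finset.sum_filter, ← hfilter]
    apply Finset.sum_congr rfl
    intro k _
    rw [hftilbareq k s hs]
  have hgbarbd : ∀ i ≤ N, ∀ s ∈ Set.Icc t0 tstar,
      |gbar i s| ≤ (d:ℝ) * (C * (C * R1)) := by
    intro i hi s hs
    rw [hgbareq i hi s hs]
    refine (Finset.abs_sum_le_sum_abs _ _).trans ?_
    have hterm : ∀ j : Fin d, |σ j s (Tgrid t0 Tstar N i) (f s (Tgrid t0 Tstar N i)) *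
        ∫ v in s..(Tgrid t0 Tstar N i), σ j s v (f s v)| ≤ C * (C * R1) := by
      intro j
      rw [abs_mul]
      exact mul_le_mul (hσb j _ _ _) (hIabd j s (hIccsub hs) _ (hTmem i hi))
        (abs_nonneg _) hC.le
    refine (Finset.sum_le_sum (fun j _ => hterm j)).trans ?_
    rw [Finset.sum_const, Finset.card_univ, Fintype.card_fin, nsmul_eq_mul]
  have hgtilbd : ∀ i ≤ N, ∀ s ∈ Set.Icc t0 tstar,
      |gtil i s| ≤ (d:ℝ) * (C * (2 * R1 * (Γ * C))) := by
    intro i hi s hs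
    rw [hgtileq i hi s hs]
    refine (Finset.abs_sum_le_sum_abs _ _).trans ?_
    have hterm : ∀ j : Fin d, |σ j s (Tgrid t0 Tstar N i) (ftil i s) *
        (Δ * ∑ k ∈ Finset.Icc (ellIdx t0 Tstar N s) (κ s i),
          γ k s * σ j s (Tgrid t0 Tstar N k) (ftil k s))| ≤ C * (2 * R1 * (Γ * C)) := by
      intro j
      rw [abs_mul]
      refine mul_le_mul (hσb j _ _ _) ?_ (abs_nonneg _) hC.le
      exact hQbd i hi (fun k s => σ j s (Tgrid t0 Tstar N k) (ftil k s))
        (fun k s => hσb j s _ _) s hs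
    refine (Finset.sum_le_sum (fun j _ => hterm j)).trans ?_
    rw [Finset.sum_const, Finset.card_univ, Fintype.card_fin, nsmul_eq_mul]
  have hgbarint : ∀ i ≤ N, ∀ t ∈ Set.Icc t0 tstar,
      IntervalIntegrable (gbar i) MeasureTheory.volume t0 t := by
    intro i hi t ht
    rw [intervalIntegrable_iff_integrableOn_Ioc_of_le ht.1]
    apply MeasureTheory.Measure.integrableOn_of_bounded (M := (d:ℝ) * (C * (C * R1)))
      measure_Ioc_lt_top.ne (hgbarm i).aestronglyMeasurable
    apply MeasureTheory.ae_restrict_of_forall_mem measurableSet_Ioc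
    intro s hsIoc
    rw [Real.norm_eq_abs]
    exact hgbarbd i hi s ⟨hsIoc.1.le, hsIoc.2.trans ht.2⟩
  have hgtilint : ∀ i ≤ N, ∀ t ∈ Set.Icc t0 tstar,
      IntervalIntegrable (gtil i) MeasureTheory.volume t0 t := by
    intro i hi t ht
    rw [intervalIntegrable_iff_integrableOn_Ioc_of_le ht.1]
    apply MeasureTheory.Measure.integrableOn_of_bounded
      (M := (d:ℝ) * (C * (2 * R1 * (Γ * C))))
      measure_Ioc_lt_top.ne (hgtilm i hi).aestronglyMeasurable
    apply MeasureTheory.ae_restrict_of_forall_mem measurableSet_Ioc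
    intro s hsIoc
    rw [Real.norm_eq_abs]
    exact hgtilbd i hi s ⟨hsIoc.1.le, hsIoc.2.trans ht.2⟩
  -- the pointwise estimate on the difference of integrands
  have hptw : ∀ i ≤ N, ∀ s ∈ Set.Icc t0 tstar,
      |gbar i s - gtil i s| ≤ aG * uerr s + (d:ℝ) * C * C₁ * Δ ^ p := by
    intro i hi s hs
    rw [hgbareq i hi s hs, hgtileq i hi s hs, ← Finset.sum_sub_distrib]
    refine (Finset.abs_sum_le_sum_abs _ _).trans ?_
    have hunns := hunn s
    have hterm : ∀ j : Fin d,
        |σ j s (Tgrid t0 Tstar N i) (f s (Tgrid t0 Tstar N i)) *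
            (∫ v in s..(Tgrid t0 Tstar N i), σ j s v (f s v))
          - σ j s (Tgrid t0 Tstar N i) (ftil i s) *
            (Δ * ∑ k ∈ Finset.Icc (ellIdx t0 Tstar N s) (κ s i),
              γ k s * σ j s (Tgrid t0 Tstar N k) (ftil k s))|
          ≤ (L * C * R1 + 2 * C * R1 * Γ * L) * uerr s + C * (C₁ * Δ ^ p) := by
      intro j
      have hsplit : σ j s (Tgrid t0 Tstar N i) (f s (Tgrid t0 Tstar N i)) *
            (∫ v in s..(Tgrid t0 Tstar N i), σ j s v (f s v))
          - σ j s (Tgrid t0 Tstar N i) (ftil i s) *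
            (Δ * ∑ k ∈ Finset.Icc (ellIdx t0 Tstar N s) (κ s i),
              γ k s * σ j s (Tgrid t0 Tstar N k) (ftil k s))
          = (σ j s (Tgrid t0 Tstar N i) (f s (Tgrid t0 Tstar N i))
              - σ j s (Tgrid t0 Tstar N i) (ftil i s)) *
              (∫ v in s..(Tgrid t0 Tstar N i), σ j s v (f s v))
            + σ j s (Tgrid t0 Tstar N i) (ftil i s) *
              (((∫ v in s..(Tgrid t0 Tstar N i), σ j s v (f s v))
                - Δ * ∑ k ∈ Finset.Icc (ellIdx t0 Tstar N s) (κ s i),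
                    γ k s * σ j s (Tgrid t0 Tstar N k) (f s (Tgrid t0 Tstar N k)))
              + ((Δ * ∑ k ∈ Finset.Icc (ellIdx t0 Tstar N s) (κ s i),
                    γ k s * σ j s (Tgrid t0 Tstar N k) (f s (Tgrid t0 Tstar N k)))
                - Δ * ∑ k ∈ Finset.Icc (ellIdx t0 Tstar N s) (κ s i),
                    γ k s * σ j s (Tgrid t0 Tstar N k) (ftil k s))) := by
        ring
      rw [hsplit]
      have b1 : |σ j s (Tgrid t0 Tstar N i) (f s (Tgrid t0 Tstar N i))
          - σ j s (Tgrid t0 Tstar N i) (ftil i s)| ≤ L * uerr s := by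
        refine (hσl j s _ _ _).trans ?_
        exact mul_le_mul_of_nonneg_left (hule s hs i hi) hL
      have b2 : |∫ v in s..(Tgrid t0 Tstar N i), σ j s v (f s v)| ≤ C * R1 :=
        hIabd j s (hIccsub hs) _ (hTmem i hi)
      have b3 : |σ j s (Tgrid t0 Tstar N i) (ftil i s)| ≤ C := hσb j _ _ _
      have b4 : |(∫ v in s..(Tgrid t0 Tstar N i), σ j s v (f s v))
          - Δ * ∑ k ∈ Finset.Icc (ellIdx t0 Tstar N s) (κ s i),
              γ k s * σ j s (Tgrid t0 Tstar N k) (f s (Tgrid t0 Tstar N k))|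
          ≤ C₁ * Δ ^ p := by
        rw [abs_sub_comm]
        exact hquad s hs i hi j
      have b5 : |(Δ * ∑ k ∈ Finset.Icc (ellIdx t0 Tstar N s) (κ s i),
              γ k s * σ j s (Tgrid t0 Tstar N k) (f s (Tgrid t0 Tstar N k)))
          - Δ * ∑ k ∈ Finset.Icc (ellIdx t0 Tstar N s) (κ s i),
              γ k s * σ j s (Tgrid t0 Tstar N k) (ftil k s)|
          ≤ 2 * R1 * (Γ * (L * uerr s)) := by
        rw [← mul_sub, ← Finset.sum_sub_distrib, abs_mul, abs_of_pos hΔpos]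
        have hΓLu : (0:ℝ) ≤ Γ * (L * uerr s) :=
          mul_nonneg hΓ (mul_nonneg hL hunns)
        have hsum : |∑ k ∈ Finset.Icc (ellIdx t0 Tstar N s) (κ s i),
            (γ k s * σ j s (Tgrid t0 Tstar N k) (f s (Tgrid t0 Tstar N k))
              - γ k s * σ j s (Tgrid t0 Tstar N k) (ftil k s))|
            ≤ ((Finset.Icc (ellIdx t0 Tstar N s) (κ s i)).card : ℝ)
              * (Γ * (L * uerr s)) := by
          refine (Finset.abs_sum_le_sum_abs _ _).trans ?_
          have hk' : ∀ k ∈ Finset.Icc (ellIdx t0 Tstar N s) (κ s i),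
              |γ k s * σ j s (Tgrid t0 Tstar N k) (f s (Tgrid t0 Tstar N k))
                - γ k s * σ j s (Tgrid t0 Tstar N k) (ftil k s)|
              ≤ Γ * (L * uerr s) := by
            intro k hk
            have hkN : k ≤ N := (Finset.mem_Icc.mp hk).2.trans (hκb s hs i hi).2
            rw [← mul_sub, abs_mul]
            refine mul_le_mul (hγb k s) ?_ (abs_nonneg _) hΓ
            refine (hσl j s _ _ _).trans ?_
            exact mul_le_mul_of_nonneg_left (hule s hs k hkN) hL
          refine (Finset.sum_le_sum hk').trans ?_
          rw [Finset.sum_const, nsmul_eq_mul]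
        have hcard := hcardIcc (ellIdx t0 Tstar N s) (κ s i) (hκb s hs i hi).2
        calc Δ * |∑ k ∈ Finset.Icc (ellIdx t0 Tstar N s) (κ s i),
              (γ k s * σ j s (Tgrid t0 Tstar N k) (f s (Tgrid t0 Tstar N k))
                - γ k s * σ j s (Tgrid t0 Tstar N k) (ftil k s))|
            ≤ Δ * (((Finset.Icc (ellIdx t0 Tstar N s) (κ s i)).card : ℝ)
                * (Γ * (L * uerr s))) := mul_le_mul_of_nonneg_left hsum hΔpos.le
          _ ≤ Δ * (((N:ℝ) + 1) * (Γ * (L * uerr s))) := by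
              refine mul_le_mul_of_nonneg_left ?_ hΔpos.le
              exact mul_le_mul_of_nonneg_right hcard hΓLu
          _ = (((N:ℝ) + 1) * Δ) * (Γ * (L * uerr s)) := by ring
          _ ≤ 2 * R1 * (Γ * (L * uerr s)) :=
              mul_le_mul_of_nonneg_right hΔN1 hΓLu
      refine (abs_add_le _ _).trans ?_
      have p1 : |(σ j s (Tgrid t0 Tstar N i) (f s (Tgrid t0 Tstar N i))
          - σ j s (Tgrid t0 Tstar N i) (ftil i s)) *
          (∫ v in s..(Tgrid t0 Tstar N i), σ j s v (f s v))|
          ≤ (L * uerr s) * (C * R1) := by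
        rw [abs_mul]
        exact mul_le_mul b1 b2 (abs_nonneg _)
          (mul_nonneg hL hunns)
      have p2 : |σ j s (Tgrid t0 Tstar N i) (ftil i s) *
          (((∫ v in s..(Tgrid t0 Tstar N i), σ j s v (f s v))
            - Δ * ∑ k ∈ Finset.Icc (ellIdx t0 Tstar N s) (κ s i),
                γ k s * σ j s (Tgrid t0 Tstar N k) (f s (Tgrid t0 Tstar N k)))
          + ((Δ * ∑ k ∈ Finset.Icc (ellIdx t0 Tstar N s) (κ s i),
                γ k s * σ j s (Tgrid t0 Tstar N k) (f s (Tgrid t0 Tstar N k)))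
            - Δ * ∑ k ∈ Finset.Icc (ellIdx t0 Tstar N s) (κ s i),
                γ k s * σ j s (Tgrid t0 Tstar N k) (ftil k s)))|
          ≤ C * (C₁ * Δ ^ p + 2 * R1 * (Γ * (L * uerr s))) := by
        rw [abs_mul]
        refine mul_le_mul b3 ((abs_add_le _ _).trans (add_le_add b4 b5)) (abs_nonneg _) hC.le
      have hfin := add_le_add p1 p2
      refine hfin.trans ?_
      apply le_of_eq
      ring
    refine (Finset.sum_le_sum (fun j _ => hterm j)).trans ?_
    rw [Finset.sum_const, Finset.card_univ, Fintype.card_fin, nsmul_eq_mul]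
    rw [haGdef]
    apply le_of_eq
    ring
  -- the Gronwall-type integral inequality
  have huineq : ∀ t ∈ Set.Icc t0 tstar,
      uerr t ≤ ((d:ℝ) * C * C₁ * Δ ^ p * R0) + aG * ∫ s in t0..t, uerr s := by
    intro t ht
    have h0t : t0 ≤ t := ht.1
    have hintnn : 0 ≤ ∫ s in t0..t, uerr s :=
      intervalIntegral.integral_nonneg h0t (fun s _ => hunn s)
    have hRHSnn : 0 ≤ (d:ℝ) * C * C₁ * Δ ^ p * R0 + aG * ∫ s in t0..t, uerr s := by
      have e1 : 0 ≤ (d:ℝ) * C * C₁ * Δ ^ p * R0 := by positivity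
      have e2 : 0 ≤ aG * ∫ s in t0..t, uerr s := mul_nonneg haGnn hintnn
      linarith only [e1, e2]
    rw [huerrdef]
    refine (pi_norm_le_iff_of_nonneg hRHSnn).mpr ?_
    intro iF
    obtain ⟨i, hilt⟩ := iF
    have hiN : i ≤ N := Nat.lt_succ_iff.mp hilt
    have hclamp : clampW t0 tstar t = t := clampW_eq ht
    simp only [hclamp, Real.norm_eq_abs]
    rw [hfeq t ht _ (hTmem i hiN), hfteq i hiN t ht, add_sub_add_left_eq_sub]
    have hc1 : (∫ s in t0..t, ∑ j : Fin d,
        σ j s (Tgrid t0 Tstar N i) (f s (Tgrid t0 Tstar N i)) *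
          ∫ v in s..(Tgrid t0 Tstar N i), σ j s v (f s v))
        = ∫ s in t0..t, gbar i s := by
      apply intervalIntegral.integral_congr
      intro s hs
      rw [Set.uIcc_of_le h0t] at hs
      exact (hgbareq i hiN s ⟨hs.1, hs.2.trans ht.2⟩).symm
    have hc2 : (∫ s in t0..t, ∑ j : Fin d,
        σ j s (Tgrid t0 Tstar N i) (ftil i s) *
          (Δ * ∑ k ∈ Finset.Icc (ellIdx t0 Tstar N s) (κ s i),
            γ k s * σ j s (Tgrid t0 Tstar N k) (ftil k s)))
        = ∫ s in t0..t, gtil i s := by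
      apply intervalIntegral.integral_congr
      intro s hs
      rw [Set.uIcc_of_le h0t] at hs
      exact (hgtileq i hiN s ⟨hs.1, hs.2.trans ht.2⟩).symm
    rw [hc1, hc2,
      ← intervalIntegral.integral_sub (hgbarint i hiN t ht) (hgtilint i hiN t ht)]
    have hbint : IntervalIntegrable (fun s => aG * uerr s + (d:ℝ) * C * C₁ * Δ ^ p)
        MeasureTheory.volume t0 t :=
      ((hucont.intervalIntegrable t0 t).const_mul aG).add intervalIntegrable_const
    have hae : ∀ᵐ s ∂(MeasureTheory.volume.restrict (Set.uIoc t0 t)),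
        ‖gbar i s - gtil i s‖ ≤ aG * uerr s + (d:ℝ) * C * C₁ * Δ ^ p := by
      apply MeasureTheory.ae_restrict_of_forall_mem measurableSet_uIoc
      intro s hs
      rw [Set.uIoc_of_le h0t] at hs
      rw [Real.norm_eq_abs]
      exact hptw i hiN s ⟨hs.1.le, hs.2.trans ht.2⟩
    have h := intervalIntegral.norm_integral_le_abs_of_norm_le hae hbint
    rw [Real.norm_eq_abs] at h
    refine h.trans ?_
    have hval : (∫ s in t0..t, (aG * uerr s + (d:ℝ) * C * C₁ * Δ ^ p))
        = aG * (∫ s in t0..t, uerr s) + (d:ℝ) * C * C₁ * Δ ^ p * (t - t0) := by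
      rw [intervalIntegral.integral_add ((hucont.intervalIntegrable t0 t).const_mul aG)
        intervalIntegrable_const, intervalIntegral.integral_const_mul,
        intervalIntegral.integral_const, smul_eq_mul]
      ring
    rw [hval]
    have habs : aG * (∫ s in t0..t, uerr s) + (d:ℝ) * C * C₁ * Δ ^ p * (t - t0)
        ≤ (d:ℝ) * C * C₁ * Δ ^ p * R0 + aG * ∫ s in t0..t, uerr s := by
      have e3 : (d:ℝ) * C * C₁ * Δ ^ p * (t - t0) ≤ (d:ℝ) * C * C₁ * Δ ^ p * R0 := by
        have ht0 : t - t0 ≤ R0 := by rw [hR0def]; linarith only [ht.2]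
        exact mul_le_mul_of_nonneg_left ht0 (by positivity)
      linarith only [e3]
    refine le_trans ?_ habs
    rw [abs_of_nonneg]
    have e4 : 0 ≤ aG * ∫ s in t0..t, uerr s := mul_nonneg haGnn hintnn
    have e5 : 0 ≤ (d:ℝ) * C * C₁ * Δ ^ p * (t - t0) := by
      have ht0 : 0 ≤ t - t0 := by linarith only [h0t]
      positivity
    linarith only [e4, e5]
  -- conclusion of Gronwall
  have hubd : ∀ t ∈ Set.Icc t0 tstar, uerr t ≤ E * Δ ^ p := by
    have hεnn : 0 ≤ (d:ℝ) * C * C₁ * Δ ^ p * R0 := by positivity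
    have h := gronwall_integral_ineq (a := t0) (b := tstar)
      h1.le haGnn hεnn hucont.continuousOn (fun t _ => hunn t) huineq
    intro t ht
    refine (h t ht).trans ?_
    apply le_of_eq
    rw [hEdef, hR0def]
    ring
  -- the short-rate combination, with a measurable global version
  set lstar := ellIdx t0 Tstar N tstar with hlstardef
  set ψ : ℝ → ℝ := fun s => ∑ i ∈ Finset.range (θ+1), lam i s *
      ∑ m ∈ Finset.range (lstar+1),
        (if ellIdx t0 Tstar N s = m then ftilbar (m+i) s else 0) with hψdef
  have hψmeas : Measurable ψ := by
    apply Finset.measurable_sum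
    intro i hi
    have hiθ : i ≤ θ := Nat.lt_succ_iff.mp (Finset.mem_range.mp hi)
    apply (hlamm i hiθ).mul
    apply Finset.measurable_sum
    intro m hm
    have hmN : m + i ≤ N := by
      have hm' := Nat.lt_succ_iff.mp (Finset.mem_range.mp hm)
      omega
    exact Measurable.ite (hellm (MeasurableSet.singleton m))
      ((hftilbarc _ hmN).measurable) measurable_const
  have hψeq : ∀ s ∈ Set.Icc t0 tstar,
      ψ s = ∑ i ∈ Finset.range (θ+1), lam i s * ftil (ellIdx t0 Tstar N s + i) s := by
    intro s hs
    rw [hψdef]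
    apply Finset.sum_congr rfl
    intro i _
    congr 1
    rw [Finset.sum_ite_eq,
      if_pos (Finset.mem_range.mpr (Nat.lt_succ_of_le (hellmono s hs)))]
    exact hftilbareq _ s hs
  have hψbd : ∀ s : ℝ, |ψ s| ≤ ((θ:ℝ)+1) * (Λ * Mt) := by
    intro s
    rw [hψdef]
    refine (Finset.abs_sum_le_sum_abs _ _).trans ?_
    have hterm : ∀ i ∈ Finset.range (θ+1),
        |lam i s * ∑ m ∈ Finset.range (lstar+1),
          (if ellIdx t0 Tstar N s = m then ftilbar (m+i) s else 0)| ≤ Λ * Mt := by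
      intro i hi
      have hiθ : i ≤ θ := Nat.lt_succ_iff.mp (Finset.mem_range.mp hi)
      rw [abs_mul]
      refine mul_le_mul (hlamb i hiθ s) ?_ (abs_nonneg _) hΛ
      rw [Finset.sum_ite_eq]
      split_ifs with hmem
      · have hkN : ellIdx t0 Tstar N s + i ≤ N := by
          have := Nat.lt_succ_iff.mp (Finset.mem_range.mp hmem)
          omega
        rw [hftilbardef]
        exact hftbd _ hkN _ (clampW_mem h1.le s)
      · rw [abs_zero]; exact hMtnn
    refine (Finset.sum_le_sum hterm).trans ?_
    rw [Finset.sum_const, Finset.card_range, nsmul_eq_mul]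
    push_cast
    exact le_rfl
  have hψint : IntervalIntegrable ψ MeasureTheory.volume t0 tstar := by
    rw [intervalIntegrable_iff_integrableOn_Ioc_of_le h1.le]
    exact MeasureTheory.Measure.integrableOn_of_bounded (measure_Ioc_lt_top).ne
      hψmeas.aestronglyMeasurable
      (Filter.Eventually.of_forall (fun s => by rw [Real.norm_eq_abs]; exact hψbd s))
  have hfss_cont : ContinuousOn (fun s => f s s) (Set.Icc t0 tstar) := by
    have := ContinuousOn.comp (t := (Set.Icc t0 tstar) ×ˢ (Set.Icc t0 Tstar)) hfc
      (Continuous.continuousOn (continuous_id.prodMk continuous_id))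
      (fun s hs => Set.mk_mem_prod hs (hIccsub hs))
    exact this
  have hfss_int : IntervalIntegrable (fun s => f s s) MeasureTheory.volume t0 tstar := by
    apply ContinuousOn.intervalIntegrable
    rw [Set.uIcc_of_le h1.le]
    exact hfss_cont
  -- discretization error of Y
  have hYd : |Y - Ytil| ≤ KY * Δ ^ p := by
    have hYeq : Y = ∫ s in t0..tstar, f s s := rfl
    have hYtil_eq : Ytil = ∫ s in t0..tstar, ψ s := by
      have h0 : Ytil = ∫ s in t0..tstar,
          ∑ i ∈ Finset.range (θ+1), lam i s * ftil (ellIdx t0 Tstar N s + i) s := rfl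
      rw [h0]
      apply intervalIntegral.integral_congr
      intro s hs
      rw [Set.uIcc_of_le h1.le] at hs
      exact (hψeq s hs).symm
    rw [hYeq, hYtil_eq, ← intervalIntegral.integral_sub hfss_int hψint]
    have hbd : ∀ s ∈ Set.uIoc t0 tstar,
        ‖f s s - ψ s‖ ≤ C₁ * Δ ^ p + ((θ:ℝ)+1) * (Λ * (E * Δ ^ p)) := by
      intro s hs
      rw [Set.uIoc_of_le h1.le] at hs
      have hsI : s ∈ Set.Icc t0 tstar := ⟨hs.1.le, hs.2⟩
      rw [Real.norm_eq_abs, hψeq s hsI]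
      have e1 : |f s s - ∑ i ∈ Finset.range (θ+1),
          lam i s * f s (Tgrid t0 Tstar N (ellIdx t0 Tstar N s + i))| ≤ C₁ * Δ ^ p :=
        hlama s hsI
      have e2 : |∑ i ∈ Finset.range (θ+1),
            lam i s * f s (Tgrid t0 Tstar N (ellIdx t0 Tstar N s + i))
          - ∑ i ∈ Finset.range (θ+1), lam i s * ftil (ellIdx t0 Tstar N s + i) s|
          ≤ ((θ:ℝ)+1) * (Λ * (E * Δ ^ p)) := by
        rw [← Finset.sum_sub_distrib]
        refine (Finset.abs_sum_le_sum_abs _ _).trans ?_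
        have hterm : ∀ i ∈ Finset.range (θ+1),
            |lam i s * f s (Tgrid t0 Tstar N (ellIdx t0 Tstar N s + i))
              - lam i s * ftil (ellIdx t0 Tstar N s + i) s| ≤ Λ * (E * Δ ^ p) := by
          intro i hi
          have hiθ : i ≤ θ := Nat.lt_succ_iff.mp (Finset.mem_range.mp hi)
          have hkN : ellIdx t0 Tstar N s + i ≤ N := by
            have := hellmono s hsI
            omega
          rw [← mul_sub, abs_mul]
          refine mul_le_mul (hlamb i hiθ s) ?_ (abs_nonneg _) hΛ
          exact (hule s hsI _ hkN).trans (hubd s hsI)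
        refine (Finset.sum_le_sum hterm).trans ?_
        rw [Finset.sum_const, Finset.card_range, nsmul_eq_mul]
        push_cast
        exact le_rfl
      calc |f s s - ∑ i ∈ Finset.range (θ+1), lam i s * ftil (ellIdx t0 Tstar N s + i) s|
          = |(f s s - ∑ i ∈ Finset.range (θ+1),
              lam i s * f s (Tgrid t0 Tstar N (ellIdx t0 Tstar N s + i)))
            + (∑ i ∈ Finset.range (θ+1),
                lam i s * f s (Tgrid t0 Tstar N (ellIdx t0 Tstar N s + i))
              - ∑ i ∈ Finset.range (θ+1), lam i s * ftil (ellIdx t0 Tstar N s + i) s)| := by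
            rw [sub_add_sub_cancel]
        _ ≤ _ + _ := abs_add_le _ _
        _ ≤ C₁ * Δ ^ p + ((θ:ℝ)+1) * (Λ * (E * Δ ^ p)) := add_le_add e1 e2
    have h := intervalIntegral.norm_integral_le_of_norm_le_const hbd
    rw [Real.norm_eq_abs] at h
    refine h.trans ?_
    have habs : |tstar - t0| = R0 := by
      rw [abs_of_pos (by linarith only [h1])]
    rw [habs]
    apply le_of_eq
    rw [hKYdef]
    ring
  -- discretization error of Z
  have hZd : |Z - SZtil| ≤ KZ * Δ ^ p := by
    have hZeq : Z = ∫ u in tstar..Tstar, f tstar u := rfl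
    have hSZeq : SZtil = Δ *
        ∑ j ∈ Finset.Icc (lstar + 1) N, γtil j * ftil j tstar := rfl
    have htmem : tstar ∈ Set.Icc t0 tstar := ⟨h1.le, le_rfl⟩
    have e1 : |Z - Δ * ∑ j ∈ Finset.Icc (lstar + 1) N,
        γtil j * f tstar (Tgrid t0 Tstar N j)| ≤ C₁ * Δ ^ p := by
      rw [hZeq, abs_sub_comm]
      exact hZq
    have e2 : |Δ * ∑ j ∈ Finset.Icc (lstar + 1) N, γtil j * f tstar (Tgrid t0 Tstar N j)
        - SZtil| ≤ R1 * Γ * E * Δ ^ p := by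
      rw [hSZeq, ← mul_sub, ← Finset.sum_sub_distrib, abs_mul, abs_of_pos hΔpos]
      have hsum : |∑ j ∈ Finset.Icc (lstar + 1) N,
          (γtil j * f tstar (Tgrid t0 Tstar N j) - γtil j * ftil j tstar)|
          ≤ ((Finset.Icc (lstar + 1) N).card : ℝ) * (Γ * (E * Δ ^ p)) := by
        refine (Finset.abs_sum_le_sum_abs _ _).trans ?_
        have hterm : ∀ j ∈ Finset.Icc (lstar + 1) N,
            |γtil j * f tstar (Tgrid t0 Tstar N j) - γtil j * ftil j tstar|
              ≤ Γ * (E * Δ ^ p) := by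
          intro j hj
          have hjN : j ≤ N := (Finset.mem_Icc.mp hj).2
          rw [← mul_sub, abs_mul]
          refine mul_le_mul (hγtb j) ?_ (abs_nonneg _) hΓ
          exact (hule tstar htmem j hjN).trans (hubd tstar htmem)
        refine (Finset.sum_le_sum hterm).trans ?_
        rw [Finset.sum_const, nsmul_eq_mul]
      have hcard : ((Finset.Icc (lstar + 1) N).card : ℝ) ≤ (N:ℝ) := by
        rw [Nat.card_Icc]
        exact_mod_cast (by omega : N + 1 - (lstar + 1) ≤ N)
      calc Δ * |∑ j ∈ Finset.Icc (lstar + 1) N,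
            (γtil j * f tstar (Tgrid t0 Tstar N j) - γtil j * ftil j tstar)|
          ≤ Δ * (((Finset.Icc (lstar + 1) N).card : ℝ) * (Γ * (E * Δ ^ p))) :=
            mul_le_mul_of_nonneg_left hsum hΔpos.le
        _ ≤ Δ * ((N:ℝ) * (Γ * (E * Δ ^ p))) := by
            refine mul_le_mul_of_nonneg_left ?_ hΔpos.le
            refine mul_le_mul_of_nonneg_right hcard ?_
            positivity
        _ = ((N:ℝ) * Δ) * (Γ * (E * Δ ^ p)) := by ring
        _ = R1 * Γ * E * Δ ^ p := by rw [hNΔ]; ring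
    calc |Z - SZtil| = |(Z - Δ * ∑ j ∈ Finset.Icc (lstar + 1) N,
          γtil j * f tstar (Tgrid t0 Tstar N j))
        + (Δ * ∑ j ∈ Finset.Icc (lstar + 1) N, γtil j * f tstar (Tgrid t0 Tstar N j)
          - SZtil)| := by rw [sub_add_sub_cancel]
      _ ≤ _ + _ := abs_add_le _ _
      _ ≤ C₁ * Δ ^ p + R1 * Γ * E * Δ ^ p := add_le_add e1 e2
      _ = KZ * Δ ^ p := by rw [hKZdef]; ring
  -- a priori bounds on Y, Ytil, Z, SZtil
  have hYbd : |Y| ≤ MY := by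
    have hYeq : Y = ∫ s in t0..tstar, f s s := rfl
    rw [hYeq]
    have hbd : ∀ s ∈ Set.uIoc t0 tstar, ‖f s s‖ ≤ M := by
      intro s hs
      rw [Set.uIoc_of_le h1.le] at hs
      have hsI : s ∈ Set.Icc t0 tstar := ⟨hs.1.le, hs.2⟩
      rw [Real.norm_eq_abs]
      exact hfbd s hsI s (hIccsub hsI)
    have h := intervalIntegral.norm_integral_le_of_norm_le_const hbd
    rw [Real.norm_eq_abs] at h
    refine h.trans ?_
    have habs : |tstar - t0| = R0 := by
      rw [abs_of_pos (by linarith only [h1])]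
    rw [habs, hMYdef]
    have : 0 ≤ R0 * (((θ:ℝ) + 1) * Λ * Mt) := by positivity
    linarith only [this]
  have hYtbd : |Ytil| ≤ MY := by
    have hYtil_eq2 : Ytil = ∫ s in t0..tstar, ψ s := by
      have h0 : Ytil = ∫ s in t0..tstar,
          ∑ i ∈ Finset.range (θ+1), lam i s * ftil (ellIdx t0 Tstar N s + i) s := rfl
      rw [h0]
      apply intervalIntegral.integral_congr
      intro s hs
      rw [Set.uIcc_of_le h1.le] at hs
      exact (hψeq s hs).symm
    rw [hYtil_eq2]
    have hbd : ∀ s ∈ Set.uIoc t0 tstar, ‖ψ s‖ ≤ ((θ:ℝ)+1) * (Λ * Mt) := by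
      intro s _
      rw [Real.norm_eq_abs]
      exact hψbd s
    have h := intervalIntegral.norm_integral_le_of_norm_le_const hbd
    rw [Real.norm_eq_abs] at h
    refine h.trans ?_
    have habs : |tstar - t0| = R0 := by
      rw [abs_of_pos (by linarith only [h1])]
    rw [habs, hMYdef]
    have h5 : ((θ:ℝ)+1) * (Λ * Mt) * R0 = R0 * (((θ:ℝ) + 1) * Λ * Mt) := by ring
    have h6 : 0 ≤ R0 * M := by positivity
    linarith only [h5, h6]
  have hZbd : |Z| ≤ MZ := by
    have hZeq : Z = ∫ u in tstar..Tstar, f tstar u := rfl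
    rw [hZeq]
    have hbd : ∀ u ∈ Set.uIoc tstar Tstar, ‖f tstar u‖ ≤ M := by
      intro v hv
      rw [Set.uIoc_of_le h2] at hv
      rw [Real.norm_eq_abs]
      exact hfbd tstar ⟨h1.le, le_rfl⟩ v ⟨by linarith only [h1, hv.1], hv.2⟩
    have h := intervalIntegral.norm_integral_le_of_norm_le_const hbd
    rw [Real.norm_eq_abs] at h
    refine h.trans ?_
    have habs : |Tstar - tstar| ≤ R1 := by
      rw [abs_of_nonneg (by linarith only [h2]), hR1def]
      linarith only [h1]
    have h7 : M * |Tstar - tstar| ≤ M * R1 := mul_le_mul_of_nonneg_left habs hMnn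
    rw [hMZdef]
    have h8 : 0 ≤ R1 * Γ * Mt := by positivity
    have h9 : M * R1 = R1 * M := by ring
    linarith only [h7, h8, h9]
  have hSZbd : |SZtil| ≤ MZ := by
    have hSZeq : SZtil = Δ * ∑ j ∈ Finset.Icc (lstar + 1) N, γtil j * ftil j tstar := rfl
    rw [hSZeq, abs_mul, abs_of_pos hΔpos]
    have hsum : |∑ j ∈ Finset.Icc (lstar + 1) N, γtil j * ftil j tstar|
        ≤ ((Finset.Icc (lstar + 1) N).card : ℝ) * (Γ * Mt) := by
      refine (Finset.abs_sum_le_sum_abs _ _).trans ?_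
      have hterm : ∀ j ∈ Finset.Icc (lstar + 1) N, |γtil j * ftil j tstar| ≤ Γ * Mt := by
        intro j hj
        have hjN : j ≤ N := (Finset.mem_Icc.mp hj).2
        rw [abs_mul]
        exact mul_le_mul (hγtb j) (hftbd j hjN tstar ⟨h1.le, le_rfl⟩) (abs_nonneg _) hΓ
      refine (Finset.sum_le_sum hterm).trans ?_
      rw [Finset.sum_const, nsmul_eq_mul]
    have hcard : ((Finset.Icc (lstar + 1) N).card : ℝ) ≤ (N:ℝ) := by
      rw [Nat.card_Icc]
      exact_mod_cast (by omega : N + 1 - (lstar + 1) ≤ N)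
    calc Δ * |∑ j ∈ Finset.Icc (lstar + 1) N, γtil j * ftil j tstar|
        ≤ Δ * (((Finset.Icc (lstar + 1) N).card : ℝ) * (Γ * Mt)) :=
          mul_le_mul_of_nonneg_left hsum hΔpos.le
      _ ≤ Δ * ((N:ℝ) * (Γ * Mt)) := by
          refine mul_le_mul_of_nonneg_left ?_ hΔpos.le
          refine mul_le_mul_of_nonneg_right hcard ?_
          positivity
      _ = ((N:ℝ) * Δ) * (Γ * Mt) := by ring
      _ = R1 * Γ * Mt := by rw [hNΔ]; ring
      _ ≤ MZ := by
          rw [hMZdef]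
          have : 0 ≤ R1 * M := by positivity
          linarith only [this]
  -- final combination
  have hexpMY : 0 < Real.exp MY := Real.exp_pos _
  have hexpMZ : 0 < Real.exp MZ := Real.exp_pos _
  have hA : |Real.exp (-Y) - Real.exp (-Ytil)| ≤ Real.exp MY * |Y - Ytil| := by
    have := abs_exp_sub_exp_le (B := MY) (x := -Y) (y := -Ytil)
      (by linarith only [(abs_le.mp hYbd).1]) (by linarith only [(abs_le.mp hYtbd).1])
    calc |Real.exp (-Y) - Real.exp (-Ytil)| ≤ Real.exp MY * |(-Y) - (-Ytil)| := this
      _ = Real.exp MY * |Y - Ytil| := by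
          congr 1
          rw [show (-Y) - (-Ytil) = -(Y - Ytil) by ring, abs_neg]
  have hB : |G (Real.exp (-Z))| ≤ |G 0| + LG * Real.exp MZ := by
    have h1' : |G (Real.exp (-Z)) - G 0| ≤ LG * |Real.exp (-Z) - 0| := hGlip _ _
    have h2' : |Real.exp (-Z) - 0| = Real.exp (-Z) := by
      rw [sub_zero, abs_of_pos (Real.exp_pos _)]
    have h3' : Real.exp (-Z) ≤ Real.exp MZ :=
      Real.exp_le_exp.mpr (by linarith only [(abs_le.mp hZbd).1])
    calc |G (Real.exp (-Z))| = |(G (Real.exp (-Z)) - G 0) + G 0| := by rw [sub_add_cancel]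
      _ ≤ |G (Real.exp (-Z)) - G 0| + |G 0| := abs_add_le _ _
      _ ≤ LG * Real.exp (-Z) + |G 0| := by rw [h2'] at h1'; linarith only [h1']
      _ ≤ |G 0| + LG * Real.exp MZ := by nlinarith only [h3', hLG]
  have hA' : Real.exp (-Ytil) ≤ Real.exp MY :=
    Real.exp_le_exp.mpr (by linarith only [(abs_le.mp hYtbd).1])
  have hBB : |G (Real.exp (-Z)) - G (Real.exp (-SZtil))| ≤ LG * Real.exp MZ * |Z - SZtil| := by
    have h1' := hGlip (Real.exp (-Z)) (Real.exp (-SZtil))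
    have h2' : |Real.exp (-Z) - Real.exp (-SZtil)| ≤ Real.exp MZ * |Z - SZtil| := by
      have := abs_exp_sub_exp_le (B := MZ) (x := -Z) (y := -SZtil)
        (by linarith only [(abs_le.mp hZbd).1]) (by linarith only [(abs_le.mp hSZbd).1])
      calc |Real.exp (-Z) - Real.exp (-SZtil)| ≤ Real.exp MZ * |(-Z) - (-SZtil)| := this
        _ = Real.exp MZ * |Z - SZtil| := by
            congr 1
            rw [show (-Z) - (-SZtil) = -(Z - SZtil) by ring, abs_neg]
    calc |G (Real.exp (-Z)) - G (Real.exp (-SZtil))|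
        ≤ LG * |Real.exp (-Z) - Real.exp (-SZtil)| := h1'
      _ ≤ LG * (Real.exp MZ * |Z - SZtil|) := mul_le_mul_of_nonneg_left h2' hLG
      _ = LG * Real.exp MZ * |Z - SZtil| := by ring
  have hsplit : |Real.exp (-Y) * G (Real.exp (-Z)) - Real.exp (-Ytil) * G (Real.exp (-SZtil))|
      ≤ |Real.exp (-Y) - Real.exp (-Ytil)| * |G (Real.exp (-Z))|
        + Real.exp (-Ytil) * |G (Real.exp (-Z)) - G (Real.exp (-SZtil))| := by
    have key : Real.exp (-Y) * G (Real.exp (-Z)) - Real.exp (-Ytil) * G (Real.exp (-SZtil))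
        = (Real.exp (-Y) - Real.exp (-Ytil)) * G (Real.exp (-Z))
          + Real.exp (-Ytil) * (G (Real.exp (-Z)) - G (Real.exp (-SZtil))) := by ring
    rw [key]
    refine (abs_add_le _ _).trans ?_
    rw [abs_mul, abs_mul, abs_of_pos (Real.exp_pos (-Ytil))]
  refine hsplit.trans ?_
  have step1 : |Real.exp (-Y) - Real.exp (-Ytil)| * |G (Real.exp (-Z))|
      ≤ (Real.exp MY * (KY * Δ ^ p)) * (|G 0| + LG * Real.exp MZ) := by
    have l1 : |Real.exp (-Y) - Real.exp (-Ytil)| ≤ Real.exp MY * (KY * Δ ^ p) := by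
      refine hA.trans ?_
      have h'' := mul_le_mul_of_nonneg_left hYd hexpMY.le
      linarith only [h'']
    exact mul_le_mul l1 hB (abs_nonneg _) (by positivity)
  have step2 : Real.exp (-Ytil) * |G (Real.exp (-Z)) - G (Real.exp (-SZtil))|
      ≤ Real.exp MY * (LG * Real.exp MZ * (KZ * Δ ^ p)) := by
    have l2 : |G (Real.exp (-Z)) - G (Real.exp (-SZtil))| ≤ LG * Real.exp MZ * (KZ * Δ ^ p) := by
      refine hBB.trans ?_
      have hnn : (0:ℝ) ≤ LG * Real.exp MZ := by positivity
      have h'' := mul_le_mul_of_nonneg_left hZd hnn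
      linarith only [h'']
    exact mul_le_mul hA' l2 (abs_nonneg _) hexpMY.le
  have : (Real.exp MY * (KY * Δ ^ p)) * (|G 0| + LG * Real.exp MZ)
      + Real.exp MY * (LG * Real.exp MZ * (KZ * Δ ^ p))
      = (Real.exp MY * ((|G 0| + LG * Real.exp MZ) * KY + LG * Real.exp MZ * KZ)) * Δ ^ p := by
    ring
  have hfin := add_le_add step1 step2
  rw [this] at hfin
  refine hfin.trans ?_
  exact mul_le_mul_of_nonneg_right (by linarith only []) hΔp.le
end

section
/- For every c ∈ ℝ there exists a constant K > 0 depending only on c, A, B, B0, d and t* − t0 (and not on h, M, k, or the index i) such that E exp(c |f̄_k^i|) ≤ K for all indices i ∈ I and all k = 0,…,M. -/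
open MeasureTheory ProbabilityTheory


lemma pm_ae_aux {Ω : Type} [MeasurableSpace Ω] (μ : Measure Ω) [IsProbabilityMeasure μ]
    (X : Ω → ℝ) (hX : Measurable X)
    (h1 : μ {ω | X ω = 1} = 1/2) (h2 : μ {ω | X ω = -1} = 1/2) :
    (∀ᵐ ω ∂μ, X ω = 1 ∨ X ω = -1) ∧ ∫ ω, X ω ∂μ = 0 := by
  have hA : MeasurableSet {ω | X ω = 1} := hX (measurableSet_singleton 1)
  have hB : MeasurableSet {ω | X ω = -1} := hX (measurableSet_singleton (-1))
  have hdisj : Disjoint {ω | X ω = 1} {ω | X ω = -1} := by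
    rw [Set.disjoint_left]
    rintro ω hω1 hω2
    simp only [Set.mem_setOf_eq] at hω1 hω2
    rw [hω1] at hω2; norm_num at hω2
  have hunion : μ ({ω | X ω = 1} ∪ {ω | X ω = -1}) = 1 := by
    rw [measure_union hdisj hB, h1, h2, one_div, ENNReal.inv_two_add_inv_two]
  have hae : ∀ᵐ ω ∂μ, X ω = 1 ∨ X ω = -1 := by
    have hc : μ ({ω | X ω = 1} ∪ {ω | X ω = -1})ᶜ = 0 := by
      rw [measure_compl (hA.union hB) (measure_ne_top μ _), hunion, measure_univ, tsub_self]
    rw [ae_iff]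
    have hset : {a | ¬(X a = 1 ∨ X a = -1)} = ({ω | X ω = 1} ∪ {ω | X ω = -1})ᶜ := by
      ext ω; simp [not_or]
    rw [hset]; exact hc
  refine ⟨hae, ?_⟩
  have hint : Integrable X μ := by
    refine Integrable.mono' (integrable_const (1:ℝ)) hX.aestronglyMeasurable ?_
    filter_upwards [hae] with ω hω
    rcases hω with h | h <;> simp [h]
  have hcompl : μ {ω | X ω = 1}ᶜ = 1/2 := by
    rw [measure_compl hA (measure_ne_top μ _), measure_univ, h1, one_div,
      ENNReal.one_sub_inv_two]
  have e1 : ∫ ω in {ω | X ω = 1}, X ω ∂μ = 1/2 := by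
    rw [setIntegral_congr_fun hA (g := fun _ => (1:ℝ)) (fun ω hω => hω), setIntegral_const, measureReal_def, h1]
    norm_num [ENNReal.toReal_inv]
  have e2 : ∫ ω in {ω | X ω = 1}ᶜ, X ω ∂μ = -(1/2) := by
    have : ∫ ω in {ω | X ω = 1}ᶜ, X ω ∂μ = ∫ _ω in {ω | X ω = 1}ᶜ, (-1:ℝ) ∂μ := by
      refine setIntegral_congr_ae hA.compl ?_
      filter_upwards [hae] with ω hω hmem
      rcases hω with h | h
      · exact absurd h hmem
      · exact h
    rw [this, setIntegral_const, measureReal_def, hcompl]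
    norm_num [ENNReal.toReal_inv]
  have := integral_add_compl hA hint
  rw [e1, e2] at this
  linarith [this]


lemma abs_sinh_le_cosh' (x : ℝ) : |Real.sinh x| ≤ Real.cosh x := by
  rw [abs_le, Real.sinh_eq, Real.cosh_eq]
  constructor <;> nlinarith [Real.exp_pos x, Real.exp_pos (-x)]

lemma euler_step_bound {Ω : Type} (G1 : MeasurableSpace Ω) [mΩ : MeasurableSpace Ω]
    (μ : Measure Ω) [IsProbabilityMeasure μ]
    {d : ℕ} (s hh : ℝ) (hh0 : 0 ≤ hh) (A B : ℝ) (hB : 0 ≤ B)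
    (X Aa : Ω → ℝ) (Bb : Ω → Fin d → ℝ) (η : Ω → Fin d → ℝ)
    (hG1 : G1 ≤ mΩ)
    (hXm : Measurable[G1] X) (hAm : Measurable[G1] Aa)
    (hBm : ∀ j, Measurable[G1] (fun ω => Bb ω j))
    (hηm : ∀ j, Measurable (fun ω => η ω j))
    (hindep : Indep G1 (⨆ j : Fin d, MeasurableSpace.comap (fun ω => η ω j) inferInstance) μ)
    (hηpm : ∀ j, ∀ᵐ ω ∂μ, η ω j = 1 ∨ η ω j = -1)
    (hηint : ∀ j, ∫ ω, η ω j ∂μ = 0)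
    (hηindep : ∀ (D : Finset (Fin d)) (j₀ : Fin d), j₀ ∉ D →
      IndepFun (fun ω => ∏ j ∈ D, η ω j) (fun ω => η ω j₀) μ)
    (hAb : ∀ᵐ ω ∂μ, |Aa ω| ≤ A * hh) (hBb : ∀ j, ∀ᵐ ω ∂μ, |Bb ω j| ≤ B)
    {C : ℝ} (hC : ∀ᵐ ω ∂μ, |X ω| ≤ C) :
    ∫ ω, Real.exp (s * (X ω + Aa ω + Real.sqrt hh * ∑ j, Bb ω j * η ω j)) ∂μ ≤
      Real.exp (|s| * A * hh + d * (s ^ 2 * B ^ 2 * hh) / 2) *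
        ∫ ω, Real.exp (s * X ω) ∂μ := by
  classical
  set t : Fin d → Ω → ℝ := fun j ω => s * Real.sqrt hh * Bb ω j with ht
  set g : Ω → ℝ := fun ω => Real.exp (s * (X ω + Aa ω)) with hg
  set W : Finset (Fin d) → Ω → ℝ := fun S ω =>
    g ω * ((∏ j ∈ S, Real.cosh (t j ω)) * ∏ j ∈ Finset.univ \ S, Real.sinh (t j ω)) with hW
  set Y : Finset (Fin d) → Ω → ℝ := fun S ω => ∏ j ∈ Finset.univ \ S, η ω j with hY
  set κ : ℝ := Real.cosh (|s| * Real.sqrt hh * B) with hκdef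
  have hκ1 : (1 : ℝ) ≤ κ := Real.one_le_cosh _
  -- measurability
  have hWmG : ∀ S, Measurable[G1] (W S) := by
    intro S
    refine Measurable.mul ?_ (Measurable.mul ?_ ?_)
    · exact Real.measurable_exp.comp ((hXm.add hAm).const_mul s)
    · exact Finset.measurable_prod _ fun j _ =>
        Real.measurable_cosh.comp ((hBm j).const_mul (s * Real.sqrt hh))
    · exact Finset.measurable_prod _ fun j _ =>
        Real.measurable_sinh.comp ((hBm j).const_mul (s * Real.sqrt hh))
  have hWm : ∀ S, Measurable[mΩ] (W S) := fun S => (hWmG S).mono hG1 le_rfl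
  have hYm : ∀ S, Measurable[mΩ] (Y S) := fun S =>
    Finset.measurable_prod _ fun j _ => hηm j
  -- a.e. expansion
  have hae1 : (fun ω => Real.exp (s * (X ω + Aa ω + Real.sqrt hh * ∑ j, Bb ω j * η ω j)))
      =ᵐ[μ] fun ω => ∑ S ∈ Finset.univ.powerset, W S ω * Y S ω := by
    filter_upwards [ae_all_iff.2 hηpm] with ω hω
    have e1 : s * (X ω + Aa ω + Real.sqrt hh * ∑ j, Bb ω j * η ω j)
        = s * (X ω + Aa ω) + ∑ j, t j ω * η ω j := by
      rw [Finset.mul_sum, mul_add, Finset.mul_sum]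
      exact congrArg _ (Finset.sum_congr rfl fun j _ => by simp only [ht]; ring)
    rw [e1, Real.exp_add, Real.exp_sum]
    have e2 : ∀ j ∈ Finset.univ, Real.exp (t j ω * η ω j)
        = Real.cosh (t j ω) + Real.sinh (t j ω) * η ω j := by
      intro j _
      rcases hω j with h | h <;> rw [h] <;> rw [Real.cosh_eq, Real.sinh_eq] <;> ring_nf <;>
        simp [Real.exp_neg]
    rw [Finset.prod_congr rfl e2, Finset.prod_add, Finset.mul_sum]
    refine Finset.sum_congr rfl fun S hS => ?_
    simp only [hW, hY, Finset.prod_mul_distrib]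
    ring
  -- a.e. bounds
  have hWbd : ∀ S : Finset (Fin d), ∀ᵐ ω ∂μ,
      |W S ω| ≤ Real.exp (|s| * (C + A * hh)) * κ ^ d := by
    intro S
    filter_upwards [hC, hAb, ae_all_iff.2 hBb] with ω h1 h2 h3
    have htb : ∀ j, |t j ω| ≤ |s| * Real.sqrt hh * B := by
      intro j
      have hte : |t j ω| = |s| * Real.sqrt hh * |Bb ω j| := by
        simp only [ht, abs_mul, abs_of_nonneg (Real.sqrt_nonneg hh)]
      rw [hte]
      exact mul_le_mul_of_nonneg_left (h3 j) (by positivity)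
    have hcoshle : ∀ j, Real.cosh (t j ω) ≤ κ := by
      intro j
      rw [hκdef, Real.cosh_le_cosh,
        abs_of_nonneg (mul_nonneg (mul_nonneg (abs_nonneg s) (Real.sqrt_nonneg hh)) hB : (0:ℝ) ≤ |s| * Real.sqrt hh * B)]
      exact htb j
    have hcosh : ∀ j, |Real.cosh (t j ω)| ≤ κ := fun j => by
      rw [abs_of_pos (Real.cosh_pos _)]; exact hcoshle j
    have hsinh : ∀ j, |Real.sinh (t j ω)| ≤ κ := fun j =>
      (abs_sinh_le_cosh' _).trans (hcoshle j)
    have hgb : |g ω| ≤ Real.exp (|s| * (C + A * hh)) := by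
      simp only [hg]
      rw [abs_of_pos (Real.exp_pos _), Real.exp_le_exp]
      calc s * (X ω + Aa ω) ≤ |s * (X ω + Aa ω)| := le_abs_self _
        _ = |s| * |X ω + Aa ω| := abs_mul _ _
        _ ≤ |s| * (C + A * hh) := by
            refine mul_le_mul_of_nonneg_left ?_ (abs_nonneg s)
            exact (abs_add_le _ _).trans (add_le_add h1 h2)
    have hprod : |(∏ j ∈ S, Real.cosh (t j ω)) * ∏ j ∈ Finset.univ \ S, Real.sinh (t j ω)|
        ≤ κ ^ d := by
      rw [abs_mul, Finset.abs_prod, Finset.abs_prod]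
      have p1 : ∏ j ∈ S, |Real.cosh (t j ω)| ≤ ∏ _j ∈ S, κ :=
        Finset.prod_le_prod (fun j _ => abs_nonneg _) (fun j _ => hcosh j)
      have p2 : ∏ j ∈ Finset.univ \ S, |Real.sinh (t j ω)| ≤ ∏ _j ∈ Finset.univ \ S, κ :=
        Finset.prod_le_prod (fun j _ => abs_nonneg _) (fun j _ => hsinh j)
      calc (∏ j ∈ S, |Real.cosh (t j ω)|) * ∏ j ∈ Finset.univ \ S, |Real.sinh (t j ω)|
          ≤ (∏ _j ∈ S, κ) * ∏ _j ∈ Finset.univ \ S, κ :=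
            mul_le_mul p1 p2 (Finset.prod_nonneg fun j _ => abs_nonneg _)
              (Finset.prod_nonneg fun _ _ => by linarith)
        _ = κ ^ d := by
            rw [Finset.prod_const, Finset.prod_const, ← pow_add]
            congr 1
            have h1' := Finset.card_sdiff_of_subset (Finset.subset_univ S)
            have h2' := Finset.card_le_univ S
            simp only [Finset.card_univ, Fintype.card_fin] at h1' h2' ⊢
            omega
    calc |W S ω| = |g ω| * |(∏ j ∈ S, Real.cosh (t j ω)) *
          ∏ j ∈ Finset.univ \ S, Real.sinh (t j ω)| := by
          simp only [hW]; exact abs_mul _ _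
      _ ≤ Real.exp (|s| * (C + A * hh)) * κ ^ d :=
          mul_le_mul hgb hprod (abs_nonneg _) (Real.exp_nonneg _)
  have hYbd : ∀ S : Finset (Fin d), ∀ᵐ ω ∂μ, |Y S ω| ≤ 1 := by
    intro S
    filter_upwards [ae_all_iff.2 hηpm] with ω hω
    simp only [hY]
    rw [Finset.abs_prod]
    refine Finset.prod_le_one (fun j _ => abs_nonneg _) (fun j _ => ?_)
    rcases hω j with h | h <;> rw [h] <;> norm_num
  -- integrability of summands
  have hterm_int : ∀ S : Finset (Fin d), Integrable (fun ω => W S ω * Y S ω) μ := by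
    intro S
    refine Integrable.mono' (integrable_const (Real.exp (|s| * (C + A * hh)) * κ ^ d))
      ((hWm S).mul (hYm S)).aestronglyMeasurable ?_
    filter_upwards [hWbd S, hYbd S] with ω h1 h2
    rw [Real.norm_eq_abs, abs_mul]
    calc |W S ω| * |Y S ω| ≤ (Real.exp (|s| * (C + A * hh)) * κ ^ d) * 1 :=
          mul_le_mul h1 h2 (abs_nonneg _) (le_trans (abs_nonneg _) h1)
      _ = _ := mul_one _
  -- vanishing of off-diagonal terms
  have hzero : ∀ S ∈ Finset.univ.powerset, S ≠ Finset.univ →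
      ∫ ω, W S ω * Y S ω ∂μ = 0 := by
    intro S _ hSne
    have hYint0 : ∫ ω, Y S ω ∂μ = 0 := by
      obtain ⟨j₀, hj₀⟩ : (Finset.univ \ S).Nonempty := by
        rw [Finset.sdiff_nonempty]
        exact fun hsub => hSne (Finset.univ_subset_iff.1 hsub)
      have hsplit : ∀ ω, Y S ω = (∏ j ∈ (Finset.univ \ S).erase j₀, η ω j) * η ω j₀ := by
        intro ω; simp only [hY]; rw [← Finset.prod_erase_mul _ _ hj₀]
      rw [integral_congr_ae (Filter.Eventually.of_forall hsplit),
        (hηindep _ j₀ (Finset.notMem_erase _ _)).integral_fun_mul_eq_mul_integral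
          (Finset.measurable_prod _ fun j _ => hηm j).aestronglyMeasurable
          (hηm j₀).aestronglyMeasurable,
        hηint j₀, mul_zero]
    have hWYindep : IndepFun (W S) (Y S) μ := by
      show Indep (MeasurableSpace.comap (W S) inferInstance)
        (MeasurableSpace.comap (Y S) inferInstance) μ
      refine indep_of_indep_of_le_left (indep_of_indep_of_le_right hindep ?_) ?_
      · rw [← measurable_iff_comap_le]
        exact Finset.measurable_prod _ fun j _ =>
          measurable_iff_comap_le.2 (le_iSup_of_le j le_rfl)
      · exact le_trans (measurable_iff_comap_le.1 (hWmG S)) le_rfl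
    rw [IndepFun.integral_fun_mul_eq_mul_integral hWYindep (hWm S).aestronglyMeasurable (hYm S).aestronglyMeasurable,
      hYint0, mul_zero]
  -- integrability of exp (s X)
  have hXint : Integrable (fun ω => Real.exp (s * X ω)) μ := by
    refine Integrable.mono' (integrable_const (Real.exp (|s| * C)))
      (Real.measurable_exp.comp (((hXm.mono hG1 le_rfl)).const_mul s)).aestronglyMeasurable ?_
    filter_upwards [hC] with ω h1
    rw [Real.norm_eq_abs, abs_of_pos (Real.exp_pos _), Real.exp_le_exp]
    calc s * X ω ≤ |s * X ω| := le_abs_self _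
      _ = |s| * |X ω| := abs_mul _ _
      _ ≤ |s| * C := mul_le_mul_of_nonneg_left h1 (abs_nonneg s)
  -- main term bound
  have hmain : ∫ ω, W Finset.univ ω * Y Finset.univ ω ∂μ ≤
      Real.exp (|s| * A * hh + d * (s ^ 2 * B ^ 2 * hh) / 2) *
        ∫ ω, Real.exp (s * X ω) ∂μ := by
    have hpt : ∀ᵐ ω ∂μ, W Finset.univ ω * Y Finset.univ ω ≤
        Real.exp (|s| * A * hh + d * (s ^ 2 * B ^ 2 * hh) / 2) * Real.exp (s * X ω) := by
      filter_upwards [hAb, ae_all_iff.2 hBb] with ω h2 h3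
      have hYeq : Y Finset.univ ω = 1 := by simp [hY]
      have hWeq : W Finset.univ ω = g ω * ∏ j, Real.cosh (t j ω) := by simp [hW]
      rw [hYeq, mul_one, hWeq]
      have hgb : g ω ≤ Real.exp (s * X ω) * Real.exp (|s| * A * hh) := by
        simp only [hg]
        rw [mul_add, Real.exp_add]
        refine mul_le_mul_of_nonneg_left ?_ (Real.exp_nonneg _)
        rw [Real.exp_le_exp]
        calc s * Aa ω ≤ |s * Aa ω| := le_abs_self _
          _ = |s| * |Aa ω| := abs_mul _ _
          _ ≤ |s| * (A * hh) := mul_le_mul_of_nonneg_left h2 (abs_nonneg s)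
          _ = |s| * A * hh := by ring
      have hper : ∀ j, Real.cosh (t j ω) ≤ Real.exp (s ^ 2 * B ^ 2 * hh / 2) := by
        intro j
        have h1 : Real.cosh (t j ω) ≤ Real.cosh (|s| * Real.sqrt hh * B) := by
          rw [Real.cosh_le_cosh,
            abs_of_nonneg (mul_nonneg (mul_nonneg (abs_nonneg s) (Real.sqrt_nonneg hh)) hB : (0:ℝ) ≤ |s| * Real.sqrt hh * B)]
          have hte : |t j ω| = |s| * Real.sqrt hh * |Bb ω j| := by
            simp only [ht, abs_mul, abs_of_nonneg (Real.sqrt_nonneg hh)]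
          rw [hte]
          exact mul_le_mul_of_nonneg_left (h3 j) (by positivity)
        refine h1.trans ((Real.cosh_le_exp_half_sq _).trans ?_)
        rw [Real.exp_le_exp]
        have : (|s| * Real.sqrt hh * B) ^ 2 = s ^ 2 * hh * B ^ 2 := by
          rw [mul_pow, mul_pow, sq_abs, Real.sq_sqrt hh0]
        rw [this]
        exact le_of_eq (by ring)
      have hcb : ∏ j, Real.cosh (t j ω) ≤ Real.exp (d * (s ^ 2 * B ^ 2 * hh) / 2) := by
        calc ∏ j, Real.cosh (t j ω) ≤ ∏ _j : Fin d, Real.exp (s ^ 2 * B ^ 2 * hh / 2) :=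
            Finset.prod_le_prod (fun j _ => (Real.cosh_pos _).le) (fun j _ => hper j)
          _ = Real.exp (s ^ 2 * B ^ 2 * hh / 2) ^ d := by
              rw [Finset.prod_const, Finset.card_univ, Fintype.card_fin]
          _ = Real.exp (d * (s ^ 2 * B ^ 2 * hh) / 2) := by
              rw [← Real.exp_nat_mul]; congr 1; ring
      calc g ω * ∏ j, Real.cosh (t j ω)
          ≤ (Real.exp (s * X ω) * Real.exp (|s| * A * hh)) *
              Real.exp (d * (s ^ 2 * B ^ 2 * hh) / 2) :=
            mul_le_mul hgb hcb (Finset.prod_nonneg fun j _ => (Real.cosh_pos _).le)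
              (by positivity)
        _ = Real.exp (|s| * A * hh + d * (s ^ 2 * B ^ 2 * hh) / 2) * Real.exp (s * X ω) := by
            rw [← Real.exp_add, ← Real.exp_add, ← Real.exp_add]
            congr 1; ring
    refine le_trans (integral_mono_ae (hterm_int _) (hXint.const_mul _) hpt) ?_
    rw [integral_const_mul]
  -- conclusion
  calc ∫ ω, Real.exp (s * (X ω + Aa ω + Real.sqrt hh * ∑ j, Bb ω j * η ω j)) ∂μ
      = ∑ S ∈ Finset.univ.powerset, ∫ ω, W S ω * Y S ω ∂μ := by
        rw [integral_congr_ae hae1]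
        exact integral_finset_sum _ fun S _ => hterm_int S
    _ = ∫ ω, W Finset.univ ω * Y Finset.univ ω ∂μ :=
        Finset.sum_eq_single_of_mem _ (Finset.mem_powerset_self _) hzero
    _ ≤ _ := hmain

/-- Uniform exponential moment bound (the paper's Assumption 3.1) for the weak
Euler-type scheme `f̄_{k+1}^i = f̄_k^i + a_k^i + √h Σ_j b_k^{i,j} ξ_{j,k+1}` driven by
independent `±1` random variables, with `F_k`-measurable coefficients satisfying
`|a_k^i| ≤ A h`, `|b_k^{i,j}| ≤ B`, and deterministic initial data bounded by `B0`. -/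
theorem euler_scheme_exponential_moment_bound
    (c A B B0 t0 tstar : ℝ) (d : ℕ)
    (hd : 0 < d) (hA : 0 ≤ A) (hB : 0 ≤ B) (hB0 : 0 ≤ B0) (ht : t0 < tstar) :
    ∃ K > 0,
      ∀ M : ℕ, 0 < M →
      ∀ (Ω : Type) (_ : MeasurableSpace Ω) (μ : Measure Ω), IsProbabilityMeasure μ →
      ∀ ξ : Fin d → ℕ → Ω → ℝ,
        (∀ j k, Measurable (ξ j k)) →
        -- symmetric Bernoulli (±1) distribution
        (∀ j k, 1 ≤ k → k ≤ M →
          μ {ω | ξ j k ω = 1} = 1/2 ∧ μ {ω | ξ j k ω = -1} = 1/2) →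
        -- independence of the family {ξ_{j,k} : 1 ≤ j ≤ d, 1 ≤ k ≤ M}
        iIndepFun
          (fun q : Fin d × Fin M => ξ q.1 (q.2.1 + 1)) μ →
      ∀ (I : Type) (_ : Fintype I),
      ∀ finit : I → ℝ, (∀ i, |finit i| ≤ B0) →
      ∀ (a : ℕ → I → Ω → ℝ) (b : ℕ → I → Fin d → Ω → ℝ)
        (fbar : ℕ → I → Ω → ℝ),
        let h : ℝ := (tstar - t0) / M
        let F : ℕ → MeasurableSpace Ω := fun k =>
          ⨆ (j : Fin d) (l : ℕ) (_ : 1 ≤ l) (_ : l ≤ k),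
            MeasurableSpace.comap (ξ j l) inferInstance
        -- coefficients are `F_k`-measurable and a.s. bounded
        (∀ k < M, ∀ i, Measurable[F k] (a k i)) →
        (∀ k < M, ∀ i j, Measurable[F k] (b k i j)) →
        (∀ k < M, ∀ i, ∀ᵐ ω ∂μ, |a k i ω| ≤ A * h) →
        (∀ k < M, ∀ i j, ∀ᵐ ω ∂μ, |b k i j ω| ≤ B) →
        -- the scheme
        (∀ i ω, fbar 0 i ω = finit i) →
        (∀ k < M, ∀ i ω, fbar (k + 1) i ω =
          fbar k i ω + a k i ω +
            Real.sqrt h * ∑ j : Fin d, b k i j ω * ξ j (k + 1) ω) →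
        -- uniform exponential moment bound
        ∀ (i : I), ∀ k ≤ M,
          ∫⁻ ω, ENNReal.ofReal (Real.exp (c * |fbar k i ω|)) ∂μ
            ≤ ENNReal.ofReal K := by
  
  classical
  refine ⟨2 * Real.exp (|c| * B0 + |c| * A * (tstar - t0) +
    d * (c ^ 2 * B ^ 2 * (tstar - t0)) / 2), by positivity, ?_⟩
  intro M hM Ω mΩ μ hμ ξ hξmeas hξdist hindep I instI finit hfinit a b fbar h F
    haM hbM haB hbB hf0 hfrec i k hkM
  haveI := hμ
  have hT : (0:ℝ) < tstar - t0 := sub_pos.2 ht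
  have hhdef : h = (tstar - t0) / M := rfl
  have hh0 : 0 ≤ h := by rw [hhdef]; positivity
  have hMh : (M : ℝ) * h = tstar - t0 := by
    rw [hhdef]; field_simp
  set f : Fin d × Fin M → Ω → ℝ := fun q => ξ q.1 (q.2.1 + 1) with hfdef
  have hfm : ∀ q, Measurable (f q) := fun q => hξmeas _ _
  have hFle : ∀ n, F n ≤ mΩ := by
    intro n
    refine iSup_le fun j => iSup_le fun l => iSup_le fun _ => iSup_le fun _ => ?_
    exact measurable_iff_comap_le.1 (hξmeas j l)
  have hcomapF : ∀ (j : Fin d) (l n : ℕ), 1 ≤ l → l ≤ n →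
      MeasurableSpace.comap (ξ j l) inferInstance ≤ F n := by
    intro j l n h1 h2
    exact le_iSup_of_le j (le_iSup_of_le l (le_iSup_of_le h1 (le_iSup_of_le h2 le_rfl)))
  have hξF : ∀ (j : Fin d) (l n : ℕ), 1 ≤ l → l ≤ n → Measurable[F n] (ξ j l) :=
    fun j l n h1 h2 => measurable_iff_comap_le.2 (hcomapF j l n h1 h2)
  have hFmono : ∀ m n : ℕ, m ≤ n → F m ≤ F n := by
    intro m n hmn
    refine iSup_le fun j => iSup_le fun l => iSup_le fun h1 => iSup_le fun h2 => ?_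
    exact hcomapF j l n h1 (h2.trans hmn)
  have hpmint : ∀ (j : Fin d) (l : ℕ), 1 ≤ l → l ≤ M →
      (∀ᵐ ω ∂μ, ξ j l ω = 1 ∨ ξ j l ω = -1) ∧ ∫ ω, ξ j l ω ∂μ = 0 :=
    fun j l h1 h2 => pm_ae_aux μ _ (hξmeas j l) (hξdist j l h1 h2).1 (hξdist j l h1 h2).2
  have hfbM : ∀ n, n ≤ M → ∀ i, Measurable[F n] (fbar n i) := by
    intro n
    induction n with
    | zero =>
      intro _ i
      have he : fbar 0 i = fun _ => finit i := funext (hf0 i)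
      rw [he]; exact measurable_const
    | succ n IH =>
      intro hn i
      have hnM : n < M := hn
      have he : fbar (n+1) i = fun ω => fbar n i ω + a n i ω +
          Real.sqrt h * ∑ j, b n i j ω * ξ j (n+1) ω := funext (hfrec n hnM i)
      rw [he]
      refine Measurable.add (Measurable.add ?_ ?_) (Measurable.const_mul ?_ _)
      · exact (IH (le_of_lt hnM) i).mono (hFmono n (n+1) (Nat.le_succ n)) le_rfl
      · exact (haM n hnM i).mono (hFmono n (n+1) (Nat.le_succ n)) le_rfl
      · refine Finset.measurable_sum _ fun j _ => Measurable.mul ?_ ?_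
        · exact (hbM n hnM i j).mono (hFmono n (n+1) (Nat.le_succ n)) le_rfl
        · exact hξF j (n+1) (n+1) (by omega) le_rfl
  have hfbbd : ∀ n, n ≤ M → ∀ i, ∃ C, ∀ᵐ ω ∂μ, |fbar n i ω| ≤ C := by
    intro n
    induction n with
    | zero =>
      intro _ i
      exact ⟨B0, Filter.Eventually.of_forall fun ω => by rw [hf0 i ω]; exact hfinit i⟩
    | succ n IH =>
      intro hn i
      have hnM : n < M := hn
      obtain ⟨C, hC⟩ := IH (le_of_lt hnM) i
      refine ⟨C + A * h + Real.sqrt h * (d * B), ?_⟩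
      have hBb' : ∀ᵐ ω ∂μ, ∀ j, |b n i j ω| ≤ B := ae_all_iff.2 fun j => hbB n hnM i j
      have hpm' : ∀ᵐ ω ∂μ, ∀ j : Fin d, ξ j (n+1) ω = 1 ∨ ξ j (n+1) ω = -1 :=
        ae_all_iff.2 fun j => (hpmint j (n+1) (by omega) (by omega)).1
      filter_upwards [hC, haB n hnM i, hBb', hpm'] with ω h1 h2 h3 h4
      rw [hfrec n hnM i ω]
      have hsum : |∑ j, b n i j ω * ξ j (n+1) ω| ≤ d * B := by
        refine (Finset.abs_sum_le_sum_abs _ _).trans ?_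
        have hterm : ∀ j ∈ Finset.univ, |b n i j ω * ξ j (n+1) ω| ≤ B := by
          intro j _
          rw [abs_mul]
          rcases h4 j with hj | hj <;> rw [hj] <;> simp <;> exact h3 j
        refine (Finset.sum_le_sum hterm).trans ?_
        rw [Finset.sum_const, Finset.card_univ, Fintype.card_fin, nsmul_eq_mul]
      calc |fbar n i ω + a n i ω + Real.sqrt h * ∑ j, b n i j ω * ξ j (n+1) ω|
          ≤ |fbar n i ω| + |a n i ω| +
            |Real.sqrt h * ∑ j, b n i j ω * ξ j (n+1) ω| := abs_add_three _ _ _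
        _ ≤ C + A * h + Real.sqrt h * (d * B) := by
            refine add_le_add (add_le_add h1 h2) ?_
            rw [abs_mul, abs_of_nonneg (Real.sqrt_nonneg h)]
            exact mul_le_mul_of_nonneg_left hsum (Real.sqrt_nonneg h)
  have hexpint : ∀ (s : ℝ) (n : ℕ), n ≤ M → ∀ i,
      Integrable (fun ω => Real.exp (s * fbar n i ω)) μ := by
    intro s n hn i
    obtain ⟨C, hC⟩ := hfbbd n hn i
    refine Integrable.mono' (integrable_const (Real.exp (|s| * C)))
      (Real.measurable_exp.comp
        (((hfbM n hn i).mono (hFle n) le_rfl).const_mul s)).aestronglyMeasurable ?_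
    filter_upwards [hC] with ω h1
    rw [Real.norm_eq_abs, abs_of_pos (Real.exp_pos _), Real.exp_le_exp]
    calc s * fbar n i ω ≤ |s * fbar n i ω| := le_abs_self _
      _ = |s| * |fbar n i ω| := abs_mul _ _
      _ ≤ |s| * C := mul_le_mul_of_nonneg_left h1 (abs_nonneg s)
  -- key induction
  have key : ∀ (s : ℝ) (n : ℕ), n ≤ M → ∀ i,
      ∫ ω, Real.exp (s * fbar n i ω) ∂μ ≤
        Real.exp (|s| * B0) *
          Real.exp (|s| * A * h + d * (s ^ 2 * B ^ 2 * h) / 2) ^ n := by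
    intro s n
    induction n with
    | zero =>
      intro _ i
      have he : (fun ω => Real.exp (s * fbar 0 i ω)) = fun _ => Real.exp (s * finit i) := by
        funext ω; rw [hf0 i ω]
      rw [he, integral_const, probReal_univ, one_smul, pow_zero, mul_one,
        Real.exp_le_exp]
      calc s * finit i ≤ |s * finit i| := le_abs_self _
        _ = |s| * |finit i| := abs_mul _ _
        _ ≤ |s| * B0 := mul_le_mul_of_nonneg_left (hfinit i) (abs_nonneg s)
    | succ n IH =>
      intro hn i
      have hnM : n < M := hn
      have hindepσ : Indep (F n)
          (⨆ j : Fin d, MeasurableSpace.comap (fun ω => ξ j (n+1) ω) inferInstance) μ := by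
        have hbase := indep_iSup_of_disjoint
          (fun q => measurable_iff_comap_le.1 (hfm q)) hindep.iIndep
          (S := {q : Fin d × Fin M | (q.2 : ℕ) < n}) (T := {q | (q.2 : ℕ) = n})
          (by
            rw [Set.disjoint_left]
            rintro ⟨j, l⟩ hl hl'
            simp only [Set.mem_setOf_eq] at hl hl'
            omega)
        refine indep_of_indep_of_le_left (indep_of_indep_of_le_right hbase ?_) ?_
        · refine iSup_le fun j => ?_
          exact le_iSup_of_le (j, ⟨n, hnM⟩)
            (le_iSup_of_le rfl le_rfl)
        · refine iSup_le fun j => iSup_le fun l => iSup_le fun h1 => iSup_le fun h2 => ?_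
          have hl : l - 1 < M := by omega
          have hval : ((⟨l-1, hl⟩ : Fin M) : ℕ) + 1 = l := by
            show l - 1 + 1 = l; omega
          have he : ξ j l = f (j, ⟨l-1, hl⟩) := by
            simp only [hfdef]
            rw [hval]
          rw [he]
          exact le_iSup_of_le (j, ⟨l-1, hl⟩)
            (le_iSup_of_le (by show l - 1 < n; omega) le_rfl)
      have hprodindep : ∀ (D : Finset (Fin d)) (j₀ : Fin d), j₀ ∉ D →
          IndepFun (fun ω => ∏ j ∈ D, ξ j (n+1) ω) (fun ω => ξ j₀ (n+1) ω) μ := by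
        intro D j₀ hj₀
        have hinj : ∀ x ∈ D, ∀ y ∈ D,
            (fun j => ((j, ⟨n, hnM⟩) : Fin d × Fin M)) x =
              (fun j => ((j, ⟨n, hnM⟩) : Fin d × Fin M)) y → x = y :=
          fun x _ y _ hxy => congrArg Prod.fst hxy
        have hmem : ((j₀, ⟨n, hnM⟩) : Fin d × Fin M) ∉
            D.image (fun j => ((j, ⟨n, hnM⟩) : Fin d × Fin M)) := by
          intro hmem
          obtain ⟨x, hxD, hxy⟩ := Finset.mem_image.1 hmem
          have : x = j₀ := congrArg Prod.fst hxy
          exact hj₀ (this ▸ hxD)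
        have hres := hindep.indepFun_finsetProd_of_notMem hfm hmem
        have heq : (∏ q ∈ D.image (fun j => ((j, ⟨n, hnM⟩) : Fin d × Fin M)), f q)
            = fun ω => ∏ j ∈ D, ξ j (n+1) ω := by
          funext ω
          rw [Finset.prod_apply, Finset.prod_image hinj]
        rw [heq] at hres
        exact hres
      obtain ⟨C, hC⟩ := hfbbd n (le_of_lt hnM) i
      have hstep := euler_step_bound (F n) μ s h hh0 A B hB (fbar n i) (a n i)
        (fun ω j => b n i j ω) (fun ω j => ξ j (n+1) ω) (hFle n)
        (hfbM n (le_of_lt hnM) i) (haM n hnM i) (fun j => hbM n hnM i j)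
        (fun j => hξmeas j (n+1)) hindepσ
        (fun j => (hpmint j (n+1) (by omega) (by omega)).1)
        (fun j => (hpmint j (n+1) (by omega) (by omega)).2) hprodindep
        (haB n hnM i) (fun j => hbB n hnM i j) hC
      have hcong : ∫ ω, Real.exp (s * fbar (n+1) i ω) ∂μ =
          ∫ ω, Real.exp (s * (fbar n i ω + a n i ω +
            Real.sqrt h * ∑ j, b n i j ω * ξ j (n+1) ω)) ∂μ :=
        integral_congr_ae (Filter.Eventually.of_forall fun ω => by simp only [hfrec n hnM i ω])
      rw [hcong]
      refine hstep.trans ?_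
      have hR0 : (0:ℝ) ≤ Real.exp (|s| * A * h + d * (s ^ 2 * B ^ 2 * h) / 2) :=
        Real.exp_nonneg _
      calc Real.exp (|s| * A * h + d * (s ^ 2 * B ^ 2 * h) / 2) *
            ∫ ω, Real.exp (s * fbar n i ω) ∂μ
          ≤ Real.exp (|s| * A * h + d * (s ^ 2 * B ^ 2 * h) / 2) *
            (Real.exp (|s| * B0) *
              Real.exp (|s| * A * h + d * (s ^ 2 * B ^ 2 * h) / 2) ^ n) :=
            mul_le_mul_of_nonneg_left (IH (le_of_lt hnM) i) hR0
        _ = Real.exp (|s| * B0) *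
              Real.exp (|s| * A * h + d * (s ^ 2 * B ^ 2 * h) / 2) ^ (n+1) := by
            rw [pow_succ]; ring
  -- common tail bound
  have hcore : Real.exp (|c| * B0) *
      Real.exp (|c| * A * h + d * (c ^ 2 * B ^ 2 * h) / 2) ^ k ≤
      Real.exp (|c| * B0 + |c| * A * (tstar - t0) +
        d * (c ^ 2 * B ^ 2 * (tstar - t0)) / 2) := by
    rw [← Real.exp_nat_mul, ← Real.exp_add, Real.exp_le_exp]
    have hkh : (k:ℝ) * h ≤ tstar - t0 := by
      rw [← hMh]
      exact mul_le_mul_of_nonneg_right (Nat.cast_le.2 hkM) hh0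
    have t1 : |c| * A * ((k:ℝ) * h) ≤ |c| * A * (tstar - t0) :=
      mul_le_mul_of_nonneg_left hkh (mul_nonneg (abs_nonneg c) hA)
    have t2 : (d:ℝ) * (c ^ 2 * B ^ 2 * ((k:ℝ) * h)) / 2 ≤
        (d:ℝ) * (c ^ 2 * B ^ 2 * (tstar - t0)) / 2 := by
      have h1 : c ^ 2 * B ^ 2 * ((k:ℝ) * h) ≤ c ^ 2 * B ^ 2 * (tstar - t0) :=
        mul_le_mul_of_nonneg_left hkh (by positivity)
      have h2 := mul_le_mul_of_nonneg_left h1 (by positivity : (0:ℝ) ≤ (d:ℝ))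
      linarith
    have expand : |c| * B0 + (k:ℝ) * (|c| * A * h + d * (c ^ 2 * B ^ 2 * h) / 2) =
        |c| * B0 + |c| * A * ((k:ℝ) * h) + (d:ℝ) * (c ^ 2 * B ^ 2 * ((k:ℝ) * h)) / 2 := by
      ring
    rw [expand]
    linarith
  have hkey1 := key c k hkM i
  have hkey2 := key (-c) k hkM i
  rw [abs_neg, neg_sq] at hkey2
  have hb1 := hkey1.trans hcore
  have hb2 := hkey2.trans hcore
  have hnn1 : 0 ≤ᵐ[μ] fun ω => Real.exp (c * fbar k i ω) :=
    Filter.Eventually.of_forall fun ω => Real.exp_nonneg _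
  have hnn2 : 0 ≤ᵐ[μ] fun ω => Real.exp (-c * fbar k i ω) :=
    Filter.Eventually.of_forall fun ω => Real.exp_nonneg _
  have hint1 := hexpint c k hkM i
  have hint2' := hexpint (-c) k hkM i
  have hint2 : Integrable (fun ω => Real.exp (-c * fbar k i ω)) μ := hint2'
  calc ∫⁻ ω, ENNReal.ofReal (Real.exp (c * |fbar k i ω|)) ∂μ
      ≤ ∫⁻ ω, (ENNReal.ofReal (Real.exp (c * fbar k i ω)) +
          ENNReal.ofReal (Real.exp (-c * fbar k i ω))) ∂μ := by
        refine lintegral_mono fun ω => ?_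
        rcases abs_choice (fbar k i ω) with hab | hab
        · rw [hab]
          exact le_self_add
        · rw [hab]
          have he : c * -(fbar k i ω) = -c * fbar k i ω := by ring
          rw [he]
          exact le_add_self
    _ = (∫⁻ ω, ENNReal.ofReal (Real.exp (c * fbar k i ω)) ∂μ) +
        ∫⁻ ω, ENNReal.ofReal (Real.exp (-c * fbar k i ω)) ∂μ := by
        refine lintegral_add_left ?_ _
        exact ENNReal.measurable_ofReal.comp (Real.measurable_exp.comp
          (((hfbM k hkM i).mono (hFle k) le_rfl).const_mul c))
    _ = ENNReal.ofReal (∫ ω, Real.exp (c * fbar k i ω) ∂μ) +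
        ENNReal.ofReal (∫ ω, Real.exp (-c * fbar k i ω) ∂μ) := by
        rw [ofReal_integral_eq_lintegral_ofReal hint1 hnn1,
          ofReal_integral_eq_lintegral_ofReal hint2 hnn2]
    _ ≤ ENNReal.ofReal (Real.exp (|c| * B0 + |c| * A * (tstar - t0) +
          d * (c ^ 2 * B ^ 2 * (tstar - t0)) / 2)) +
        ENNReal.ofReal (Real.exp (|c| * B0 + |c| * A * (tstar - t0) +
          d * (c ^ 2 * B ^ 2 * (tstar - t0)) / 2)) :=
        add_le_add (ENNReal.ofReal_le_ofReal hb1) (ENNReal.ofReal_le_ofReal hb2)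
    _ = ENNReal.ofReal (2 * Real.exp (|c| * B0 + |c| * A * (tstar - t0) +
          d * (c ^ 2 * B ^ 2 * (tstar - t0)) / 2)) := by
        rw [← ENNReal.ofReal_add (Real.exp_nonneg _) (Real.exp_nonneg _)]
        congr 1
        ring
end
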